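/- arXiv:1505.04697 — 10 statements merged into one kernel-verified Lean document; each statement's English description precedes it below -/
import Mathlib

section
/- (Lemma: bias of the matching estimator.) The bias of the matching estimator of τ_ETT is E[τ̂_M(Y)] − τ_ETT = Σ_{s∈S} w_s · Σ_{i : m(i)=s} y_C(i)·(P_i/n_T(s) − (1−P_i)/n_C(s)). -/
open MeasureTheory Finset

noncomputable section

namespace Rebar

variable {n : ℕ} {S : Type*} [Fintype S] [DecidableEq S]

/-- The matched set with label `s`: subjects `i` with `m i = s`. -/
def mSet (m : Fin n → S) (s : S) : Finset (Fin n) :=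
  Finset.univ.filter fun i => m i = s

/-- Matched-set difference `t_s(v, z)` for a vector `v` and assignment `z`. -/
def tdiff (m : Fin n → S) (nT nC : S → ℕ) (v z : Fin n → ℝ) (s : S) : ℝ :=
  (1 / (nT s : ℝ)) * ∑ i ∈ mSet m s, v i * z i
    - (1 / (nC s : ℝ)) * ∑ i ∈ mSet m s, v i * (1 - z i)

/-- Total number treated, `n_T = Σ_s n_T(s)`. -/
def nTtot (nT : S → ℕ) : ℕ := ∑ s, nT s

/-- Matched-set weight `w_s = n_T(s)/n_T`. -/
def w (nT : S → ℕ) (s : S) : ℝ := (nT s : ℝ) / (nTtot nT : ℝ)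

/-- The matching estimator `τ̂_M(v) = Σ_s w_s t_s(v, z)`. -/
def tauM (m : Fin n → S) (nT nC : S → ℕ) (v z : Fin n → ℝ) : ℝ :=
  ∑ s, w nT s * tdiff m nT nC v z s

/-- Observed outcome `Y_i = Z_i y_T(i) + (1 - Z_i) y_C(i)`. -/
def Yobs (yT yC : Fin n → ℝ) (z : Fin n → ℝ) (i : Fin n) : ℝ :=
  z i * yT i + (1 - z i) * yC i

/-- Treatment-assignment probability `P_i = Pr(Z_i = 1)`. -/
def Pr {Ω : Type*} [MeasurableSpace Ω] (μ : Measure Ω) (Z : Ω → Fin n → ℝ)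
    (i : Fin n) : ℝ :=
  (μ {ω | Z ω i = 1}).toReal

/-- The estimand: expected effect of treatment on the treated,
`τ_ETT = (Σ_i τ_i P_i)/n_T`. -/
def tauETT {Ω : Type*} [MeasurableSpace Ω] (μ : Measure Ω) (Z : Ω → Fin n → ℝ)
    (yT yC : Fin n → ℝ) (nT : S → ℕ) : ℝ :=
  (∑ i, (yT i - yC i) * Pr μ Z i) / (nTtot nT : ℝ)

/-- The design constant `C(n, n_T, n_C)`. -/
def Cdesign (n : ℕ) (nT nC : S → ℕ) : ℝ :=
  ((n : ℝ) / (nTtot nT : ℝ) ^ 2) *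
    ∑ s, ((nT s : ℝ) + (nC s : ℝ)) * (max 1 ((nT s : ℝ) / (nC s : ℝ))) ^ 2

/-- Mean squared prediction error `MSE_M = (1/n) Σ_i (ŷ_C(i) - y_C(i))²`. -/
def MSE (yC yhat : Fin n → ℝ) : ℝ :=
  (1 / (n : ℝ)) * ∑ i, (yhat i - yC i) ^ 2

end Rebar

/-- Lemma: bias of the matching estimator:
`E[τ̂_M(Y)] - τ_ETT = Σ_s w_s Σ_{i : m(i)=s} y_C(i) (P_i/n_T(s) - (1-P_i)/n_C(s))`. -/
theorem stmt2 {n : ℕ} {S : Type*} [Fintype S] [DecidableEq S] [Nonempty S]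
    (m : Fin n → S) (nT nC : S → ℕ)
    (hT : ∀ s, 0 < nT s) (hC : ∀ s, 0 < nC s)
    (hsize : ∀ s, nT s + nC s = (Rebar.mSet m s).card)
    {Ω : Type*} [MeasurableSpace Ω] (μ : Measure Ω) [IsProbabilityMeasure μ]
    (Z : Ω → Fin n → ℝ)
    (hZmeas : ∀ i, Measurable fun ω => Z ω i)
    (hZ01 : ∀ ω i, Z ω i = 0 ∨ Z ω i = 1)
    (hZsum : ∀ᵐ ω ∂μ, ∀ s, ∑ i ∈ Rebar.mSet m s, Z ω i = (nT s : ℝ))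
    (yT yC : Fin n → ℝ) :
    (∫ ω, Rebar.tauM m nT nC (Rebar.Yobs yT yC (Z ω)) (Z ω) ∂μ)
        - Rebar.tauETT μ Z yT yC nT
      = ∑ s, Rebar.w nT s *
          ∑ i ∈ Rebar.mSet m s, yC i *
            (Rebar.Pr μ Z i / (nT s : ℝ) - (1 - Rebar.Pr μ Z i) / (nC s : ℝ)) := by
  classical
  have hZint : ∀ i, MeasureTheory.Integrable (fun ω => Z ω i) μ := by
    intro i
    have hA : MeasurableSet {ω | Z ω i = 1} := (hZmeas i) (measurableSet_singleton 1)
    have heq : (fun ω => Z ω i) = Set.indicator {ω | Z ω i = 1} (fun _ => (1 : ℝ)) := by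
      funext ω
      rcases hZ01 ω i with h | h <;> simp [Set.indicator, h]
    rw [heq]
    exact (integrable_const (1 : ℝ)).indicator hA
  have hEZ : ∀ i, ∫ ω, Z ω i ∂μ = Rebar.Pr μ Z i := by
    intro i
    have hA : MeasurableSet {ω | Z ω i = 1} := (hZmeas i) (measurableSet_singleton 1)
    have heq : (fun ω => Z ω i) = Set.indicator {ω | Z ω i = 1} (fun _ => (1 : ℝ)) := by
      funext ω
      rcases hZ01 ω i with h | h <;> simp [Set.indicator, h]
    rw [heq, Rebar.Pr]
    exact MeasureTheory.integral_indicator_one hA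
  have key : ∀ ω, Rebar.tauM m nT nC (Rebar.Yobs yT yC (Z ω)) (Z ω)
      = ∑ s, Rebar.w nT s * ((1 / (nT s : ℝ)) * ∑ i ∈ Rebar.mSet m s, yT i * Z ω i
          - (1 / (nC s : ℝ)) * ∑ i ∈ Rebar.mSet m s, yC i * (1 - Z ω i)) := by
    intro ω
    unfold Rebar.tauM Rebar.tdiff
    refine Finset.sum_congr rfl fun s _ => ?_
    have h1 : ∑ i ∈ Rebar.mSet m s, Rebar.Yobs yT yC (Z ω) i * Z ω i
        = ∑ i ∈ Rebar.mSet m s, yT i * Z ω i := by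
      refine Finset.sum_congr rfl fun i _ => ?_
      rcases hZ01 ω i with h | h <;> simp [Rebar.Yobs, h]
    have h2 : ∑ i ∈ Rebar.mSet m s, Rebar.Yobs yT yC (Z ω) i * (1 - Z ω i)
        = ∑ i ∈ Rebar.mSet m s, yC i * (1 - Z ω i) := by
      refine Finset.sum_congr rfl fun i _ => ?_
      rcases hZ01 ω i with h | h <;> simp [Rebar.Yobs, h]
    rw [h1, h2]
  have hint3 : ∀ i, MeasureTheory.Integrable (fun ω => yT i * Z ω i) μ :=
    fun i => (hZint i).const_mul _
  have hsub : ∀ i, MeasureTheory.Integrable (fun ω => (1:ℝ) - Z ω i) μ :=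
    fun i => (integrable_const (1:ℝ)).sub (hZint i)
  have hint2 : ∀ i, MeasureTheory.Integrable (fun ω => yC i * (1 - Z ω i)) μ :=
    fun i => (hsub i).const_mul _
  have hint4 : ∀ s, MeasureTheory.Integrable
      (fun ω => ∑ i ∈ Rebar.mSet m s, yT i * Z ω i) μ :=
    fun s => MeasureTheory.integrable_finset_sum _ fun i _ => hint3 i
  have hint5 : ∀ s, MeasureTheory.Integrable
      (fun ω => ∑ i ∈ Rebar.mSet m s, yC i * (1 - Z ω i)) μ :=
    fun s => MeasureTheory.integrable_finset_sum _ fun i _ => hint2 i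
  have hint1 : ∀ s, MeasureTheory.Integrable
      (fun ω => (1 / (nT s : ℝ)) * ∑ i ∈ Rebar.mSet m s, yT i * Z ω i
        - (1 / (nC s : ℝ)) * ∑ i ∈ Rebar.mSet m s, yC i * (1 - Z ω i)) μ := by
    intro s
    exact ((hint4 s).const_mul _).sub ((hint5 s).const_mul _)
  have hival : (∫ ω, Rebar.tauM m nT nC (Rebar.Yobs yT yC (Z ω)) (Z ω) ∂μ)
      = ∑ s, Rebar.w nT s * ((1 / (nT s : ℝ)) * ∑ i ∈ Rebar.mSet m s, yT i * Rebar.Pr μ Z i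
          - (1 / (nC s : ℝ)) * ∑ i ∈ Rebar.mSet m s, yC i * (1 - Rebar.Pr μ Z i)) := by
    simp_rw [key]
    rw [MeasureTheory.integral_finset_sum _ (fun s _ => (hint1 s).const_mul _)]
    refine Finset.sum_congr rfl fun s _ => ?_
    rw [MeasureTheory.integral_const_mul]
    congr 1
    rw [MeasureTheory.integral_sub ((hint4 s).const_mul _) ((hint5 s).const_mul _)]
    congr 1
    · rw [MeasureTheory.integral_const_mul,
        MeasureTheory.integral_finset_sum _ (fun i _ => hint3 i)]
      congr 1
      refine Finset.sum_congr rfl fun i _ => ?_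
      rw [MeasureTheory.integral_const_mul, hEZ]
    · rw [MeasureTheory.integral_const_mul,
        MeasureTheory.integral_finset_sum _ (fun i _ => hint2 i)]
      congr 1
      refine Finset.sum_congr rfl fun i _ => ?_
      rw [MeasureTheory.integral_const_mul,
        MeasureTheory.integral_sub (integrable_const (1:ℝ)) (hZint i)]
      simp [hEZ i]
  rw [hival]
  have hNtot : (0 : ℝ) < (Rebar.nTtot nT : ℝ) := by
    have : 0 < Rebar.nTtot nT := by
      unfold Rebar.nTtot
      exact Finset.sum_pos (fun s _ => hT s) ⟨Classical.arbitrary S, Finset.mem_univ _⟩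
    exact_mod_cast this
  have hfib : ∑ i, (yT i - yC i) * Rebar.Pr μ Z i
      = ∑ s, ∑ i ∈ Rebar.mSet m s, (yT i - yC i) * Rebar.Pr μ Z i :=
    (Finset.sum_fiberwise Finset.univ m fun i => (yT i - yC i) * Rebar.Pr μ Z i).symm
  rw [Rebar.tauETT, hfib, Finset.sum_div, ← Finset.sum_sub_distrib]
  refine Finset.sum_congr rfl fun s _ => ?_
  have hTs : ((nT s : ℝ)) ≠ 0 := by exact_mod_cast (hT s).ne'
  have hCs : ((nC s : ℝ)) ≠ 0 := by exact_mod_cast (hC s).ne'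
  have hN : ((Rebar.nTtot nT : ℝ)) ≠ 0 := hNtot.ne'
  rw [Rebar.w]
  simp only [mul_sub, Finset.mul_sum, Finset.sum_div, ← Finset.sum_sub_distrib]
  refine Finset.sum_congr rfl fun i _ => ?_
  field_simp
  ring
end
end

section
/- Under perfect matching, the matching estimator is unbiased for the expected effect of the treatment on the treated: if P_i = P_j whenever m(i) = m(j), then E[τ̂_M(Y)] = τ_ETT. -/
open MeasureTheory Finset

noncomputable section

/-- Under perfect matching, the matching estimator is unbiased
for the expected effect of the treatment on the treated: `E[τ̂_M(Y)] = τ_ETT`. -/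
theorem stmt5 {n : ℕ} {S : Type*} [Fintype S] [DecidableEq S] [Nonempty S]
    (m : Fin n → S) (nT nC : S → ℕ)
    (hT : ∀ s, 0 < nT s) (hC : ∀ s, 0 < nC s)
    (hsize : ∀ s, nT s + nC s = (Rebar.mSet m s).card)
    {Ω : Type*} [MeasurableSpace Ω] (μ : Measure Ω) [IsProbabilityMeasure μ]
    (Z : Ω → Fin n → ℝ)
    (hZmeas : ∀ i, Measurable fun ω => Z ω i)
    (hZ01 : ∀ ω i, Z ω i = 0 ∨ Z ω i = 1)
    (hZsum : ∀ᵐ ω ∂μ, ∀ s, ∑ i ∈ Rebar.mSet m s, Z ω i = (nT s : ℝ))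
    (hperf : ∀ i j, m i = m j → Rebar.Pr μ Z i = Rebar.Pr μ Z j)
    (yT yC : Fin n → ℝ) :
    ∫ ω, Rebar.tauM m nT nC (Rebar.Yobs yT yC (Z ω)) (Z ω) ∂μ
      = Rebar.tauETT μ Z yT yC nT := by
  classical
  -- measurability of the event {Z ω i = 1}
  have hms : ∀ i : Fin n, MeasurableSet {ω | Z ω i = 1} :=
    fun i => (hZmeas i) (measurableSet_singleton 1)
  have hind : ∀ i : Fin n, (fun ω => Z ω i)
      = Set.indicator {ω | Z ω i = 1} (fun _ => (1:ℝ)) := by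
    intro i
    funext ω
    rcases hZ01 ω i with h | h <;> simp [Set.indicator, h]
  have hint : ∀ i : Fin n, Integrable (fun ω => Z ω i) μ := by
    intro i
    rw [hind i]
    exact (integrable_const 1).indicator (hms i)
  have hPr : ∀ i : Fin n, ∫ ω, Z ω i ∂μ = Rebar.Pr μ Z i := by
    intro i
    rw [hind i]
    rw [integral_indicator_const (1:ℝ) (hms i)]
    simp [Rebar.Pr, Measure.real]
  -- integrable pieces
  have hintA : ∀ s : S, Integrable (fun ω => ∑ i ∈ Rebar.mSet m s, yT i * Z ω i) μ :=
    fun s => integrable_finset_sum _ (fun i _ => (hint i).const_mul _)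
  have hint1 : ∀ i : Fin n, Integrable (fun ω => (1:ℝ) - Z ω i) μ := by
    intro i
    exact (integrable_const (1:ℝ)).sub (hint i)
  have hintB : ∀ s : S, Integrable (fun ω => ∑ i ∈ Rebar.mSet m s, yC i * (1 - Z ω i)) μ :=
    fun s => integrable_finset_sum _ (fun i _ => ((hint1 i).const_mul _))
  set f : S → Ω → ℝ := fun s ω => Rebar.w nT s *
      ((1 / (nT s : ℝ)) * ∑ i ∈ Rebar.mSet m s, yT i * Z ω i
        - (1 / (nC s : ℝ)) * ∑ i ∈ Rebar.mSet m s, yC i * (1 - Z ω i)) with hf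
  have hintf : ∀ s : S, Integrable (f s) μ :=
    fun s => ((((hintA s).const_mul _).sub ((hintB s).const_mul _)).const_mul _)
  -- pointwise simplification of the integrand
  have hpt : (fun ω => Rebar.tauM m nT nC (Rebar.Yobs yT yC (Z ω)) (Z ω))
      = fun ω => ∑ s, f s ω := by
    funext ω
    unfold Rebar.tauM Rebar.tdiff Rebar.Yobs
    refine Finset.sum_congr rfl fun s _ => ?_
    rw [hf]
    congr 1
    congr 2
    · refine Finset.sum_congr rfl fun i _ => ?_
      rcases hZ01 ω i with h | h <;> simp [h]
    · refine Finset.sum_congr rfl fun i _ => ?_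
      rcases hZ01 ω i with h | h <;> simp [h]
  rw [hpt, integral_finset_sum _ (fun s _ => hintf s)]
  -- expectation of each piece
  have hEs : ∀ s : S, ∫ ω, f s ω ∂μ = Rebar.w nT s *
      ((1 / (nT s : ℝ)) * ∑ i ∈ Rebar.mSet m s, yT i * Rebar.Pr μ Z i
        - (1 / (nC s : ℝ)) * ∑ i ∈ Rebar.mSet m s, yC i * (1 - Rebar.Pr μ Z i)) := by
    intro s
    rw [hf]
    rw [integral_const_mul, integral_sub ((hintA s).const_mul _) ((hintB s).const_mul _),
      integral_const_mul, integral_const_mul,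
      integral_finset_sum _ (fun i _ => (hint i).const_mul _),
      integral_finset_sum _ (fun i _ => ((hint1 i).const_mul _))]
    congr 2
    · congr 1
      refine Finset.sum_congr rfl fun i _ => ?_
      rw [integral_const_mul, hPr i]
    · congr 1
      refine Finset.sum_congr rfl fun i _ => ?_
      rw [integral_const_mul, integral_sub (integrable_const 1) (hint i), hPr i]
      simp
  -- sum of probabilities in each matched set
  have hsumP : ∀ s : S, ∑ i ∈ Rebar.mSet m s, Rebar.Pr μ Z i = (nT s : ℝ) := by
    intro s
    have h1 : ∫ ω, (∑ i ∈ Rebar.mSet m s, Z ω i) ∂μ = (nT s : ℝ) := by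
      rw [integral_congr_ae (hZsum.mono fun ω h => h s)]
      simp
    rw [← h1, integral_finset_sum _ (fun i _ => hint i)]
    exact (Finset.sum_congr rfl fun i _ => (hPr i).symm)
  -- per-set algebra using perfect matching
  have hEs' : ∀ s : S, ∫ ω, f s ω ∂μ =
      (1 / (Rebar.nTtot nT : ℝ)) * ∑ i ∈ Rebar.mSet m s, (yT i - yC i) * Rebar.Pr μ Z i := by
    intro s
    rw [hEs s]
    have hne : (Rebar.mSet m s).Nonempty := by
      rw [← Finset.card_pos, ← hsize s]
      exact Nat.add_pos_left (hT s) _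
    obtain ⟨i₀, hi₀⟩ := hne
    set p := Rebar.Pr μ Z i₀ with hp
    have hconst : ∀ i ∈ Rebar.mSet m s, Rebar.Pr μ Z i = p := by
      intro i hi
      apply hperf
      have h1 := (Finset.mem_filter.mp hi).2
      have h2 := (Finset.mem_filter.mp hi₀).2
      rw [h1, h2]
    have hcard : (∑ i ∈ Rebar.mSet m s, Rebar.Pr μ Z i)
        = ((nT s : ℝ) + (nC s : ℝ)) * p := by
      rw [Finset.sum_congr rfl hconst, Finset.sum_const, nsmul_eq_mul, ← hsize s]
      push_cast
      ring
    have hkey : ((nT s : ℝ) + (nC s : ℝ)) * p = (nT s : ℝ) := by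
      rw [← hcard, hsumP s]
    have hTne : (nT s : ℝ) ≠ 0 := Nat.cast_ne_zero.mpr (hT s).ne'
    have hCne : (nC s : ℝ) ≠ 0 := Nat.cast_ne_zero.mpr (hC s).ne'
    have e1 : ∑ i ∈ Rebar.mSet m s, yT i * Rebar.Pr μ Z i
        = (∑ i ∈ Rebar.mSet m s, yT i) * p := by
      rw [Finset.sum_mul]
      exact Finset.sum_congr rfl fun i hi => by rw [hconst i hi]
    have e2 : ∑ i ∈ Rebar.mSet m s, yC i * (1 - Rebar.Pr μ Z i)
        = (∑ i ∈ Rebar.mSet m s, yC i) * (1 - p) := by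
      rw [Finset.sum_mul]
      exact Finset.sum_congr rfl fun i hi => by rw [hconst i hi]
    have e3 : ∑ i ∈ Rebar.mSet m s, (yT i - yC i) * Rebar.Pr μ Z i
        = (∑ i ∈ Rebar.mSet m s, (yT i - yC i)) * p := by
      rw [Finset.sum_mul]
      exact Finset.sum_congr rfl fun i hi => by rw [hconst i hi]
    rw [e1, e2, e3]
    set A := ∑ i ∈ Rebar.mSet m s, yT i with hA
    set B := ∑ i ∈ Rebar.mSet m s, yC i with hB
    have hAB : (∑ i ∈ Rebar.mSet m s, (yT i - yC i)) = A - B := Finset.sum_sub_distrib _ _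
    have hBC : (1 / (nC s : ℝ)) * (B * (1 - p)) = (1 / (nT s : ℝ)) * (B * p) := by
      field_simp
      linear_combination (-B) * hkey
    have hw : Rebar.w nT s = (nT s : ℝ) / (Rebar.nTtot nT : ℝ) := rfl
    rw [hAB, hBC, hw]
    by_cases hN : (Rebar.nTtot nT : ℝ) = 0
    · simp [hN]
    · field_simp
  -- assemble
  rw [Finset.sum_congr rfl (fun s _ => hEs' s), ← Finset.mul_sum]
  unfold Rebar.tauETT
  rw [show (∑ s, ∑ i ∈ Rebar.mSet m s, (yT i - yC i) * Rebar.Pr μ Z i)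
      = ∑ i, (yT i - yC i) * Rebar.Pr μ Z i from Finset.sum_fiberwise _ _ _,
    one_div, inv_mul_eq_div]
end
end

section
/- Under perfect matching, the matching estimator applied to the fixed prediction vector has expectation zero: if P_i = P_j whenever m(i) = m(j), then E[τ̂_M(ŷ_C)] = 0. -/
open MeasureTheory Finset

noncomputable section

/-- Under perfect matching, the matching estimator applied to the
fixed prediction vector has expectation zero: `E[τ̂_M(ŷ_C)] = 0`. -/
theorem stmt7 {n : ℕ} {S : Type*} [Fintype S] [DecidableEq S] [Nonempty S]
    (m : Fin n → S) (nT nC : S → ℕ)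
    (hT : ∀ s, 0 < nT s) (hC : ∀ s, 0 < nC s)
    (hsize : ∀ s, nT s + nC s = (Rebar.mSet m s).card)
    {Ω : Type*} [MeasurableSpace Ω] (μ : Measure Ω) [IsProbabilityMeasure μ]
    (Z : Ω → Fin n → ℝ)
    (hZmeas : ∀ i, Measurable fun ω => Z ω i)
    (hZ01 : ∀ ω i, Z ω i = 0 ∨ Z ω i = 1)
    (hZsum : ∀ᵐ ω ∂μ, ∀ s, ∑ i ∈ Rebar.mSet m s, Z ω i = (nT s : ℝ))
    (hperf : ∀ i j, m i = m j → Rebar.Pr μ Z i = Rebar.Pr μ Z j)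
    (yhat : Fin n → ℝ) :
    ∫ ω, Rebar.tauM m nT nC yhat (Z ω) ∂μ = 0 := by
  classical
  have hind : ∀ i : Fin n, (fun ω => Z ω i)
      = Set.indicator {ω | Z ω i = 1} (fun _ => (1:ℝ)) := by
    intro i; funext ω
    rcases hZ01 ω i with h | h
    · simp [Set.indicator, h]
    · simp [Set.indicator, h]
  have hmeas : ∀ i : Fin n, MeasurableSet {ω | Z ω i = 1} := fun i =>
    (hZmeas i) (measurableSet_singleton 1)
  have hZint : ∀ i : Fin n, Integrable (fun ω => Z ω i) μ := by
    intro i; rw [hind i]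
    exact (integrable_const (1:ℝ)).indicator (hmeas i)
  have hZexp : ∀ i : Fin n, ∫ ω, Z ω i ∂μ = Rebar.Pr μ Z i := by
    intro i
    rw [hind i, MeasureTheory.integral_indicator_const _ (hmeas i)]
    simp [Rebar.Pr, Measure.real]
  have hPsum : ∀ s : S, ∑ i ∈ Rebar.mSet m s, Rebar.Pr μ Z i = (nT s : ℝ) := by
    intro s
    have h1 : ∫ ω, (∑ i ∈ Rebar.mSet m s, Z ω i) ∂μ = (nT s : ℝ) := by
      rw [integral_congr_ae (hZsum.mono fun ω h => h s)]
      simp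
    rw [MeasureTheory.integral_finset_sum _ (fun i _ => hZint i)] at h1
    simpa [hZexp] using h1
  have hcard : ∀ s : S, ((Rebar.mSet m s).card : ℝ) = (nT s : ℝ) + (nC s : ℝ) := by
    intro s; rw [← hsize s]; push_cast; ring
  have hP : ∀ s : S, ∀ i ∈ Rebar.mSet m s,
      Rebar.Pr μ Z i = (nT s : ℝ) / ((nT s : ℝ) + (nC s : ℝ)) := by
    intro s i hi
    have hsame : ∀ j ∈ Rebar.mSet m s, Rebar.Pr μ Z j = Rebar.Pr μ Z i := by
      intro j hj
      have hmi : m i = s := by simpa [Rebar.mSet] using hi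
      have hmj : m j = s := by simpa [Rebar.mSet] using hj
      exact hperf j i (hmj.trans hmi.symm)
    have hsum := hPsum s
    rw [Finset.sum_congr rfl hsame, Finset.sum_const, nsmul_eq_mul, hcard s] at hsum
    have hpos : (0:ℝ) < (nT s : ℝ) + (nC s : ℝ) := by
      have h1 := hT s; have h2 := hC s; positivity
    rw [eq_div_iff hpos.ne']
    linarith [hsum]
  have hBi : ∀ i : Fin n, Integrable (fun ω => yhat i * (1 - Z ω i)) μ := by
    intro i
    have h := ((integrable_const (1:ℝ)).sub (hZint i)).const_mul (yhat i)
    simpa using h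
  have intA : ∀ s : S,
      Integrable (fun ω => ∑ i ∈ Rebar.mSet m s, yhat i * Z ω i) μ := by
    intro s
    exact integrable_finset_sum _ fun i _ => (hZint i).const_mul (yhat i)
  have intB : ∀ s : S,
      Integrable (fun ω => ∑ i ∈ Rebar.mSet m s, yhat i * (1 - Z ω i)) μ := by
    intro s
    exact integrable_finset_sum _ fun i _ => hBi i
  have htint : ∀ s : S, Integrable (fun ω => Rebar.tdiff m nT nC yhat (Z ω) s) μ := by
    intro s
    simp only [Rebar.tdiff]
    exact ((intA s).const_mul _).sub ((intB s).const_mul _)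
  have htzero : ∀ s : S, ∫ ω, Rebar.tdiff m nT nC yhat (Z ω) s ∂μ = 0 := by
    intro s
    simp only [Rebar.tdiff]
    rw [integral_sub ((intA s).const_mul _) ((intB s).const_mul _),
        integral_const_mul _ _, integral_const_mul _ _,
        MeasureTheory.integral_finset_sum _ (fun i _ => (hZint i).const_mul (yhat i)),
        MeasureTheory.integral_finset_sum _ (fun i _ => hBi i)]
    have e1 : ∀ i ∈ Rebar.mSet m s,
        ∫ ω, yhat i * Z ω i ∂μ = yhat i * ((nT s : ℝ) / ((nT s : ℝ) + (nC s : ℝ))) := by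
      intro i hi
      rw [integral_const_mul _ _, hZexp, hP s i hi]
    have e2 : ∀ i ∈ Rebar.mSet m s,
        ∫ ω, yhat i * (1 - Z ω i) ∂μ
          = yhat i * (1 - (nT s : ℝ) / ((nT s : ℝ) + (nC s : ℝ))) := by
      intro i hi
      rw [integral_const_mul _ _, integral_sub (integrable_const _) (hZint i),
        hZexp, hP s i hi]
      simp
    rw [Finset.sum_congr rfl e1, Finset.sum_congr rfl e2,
        ← Finset.sum_mul, ← Finset.sum_mul]
    have hTpos : (0:ℝ) < (nT s : ℝ) := by exact_mod_cast hT s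
    have hCpos : (0:ℝ) < (nC s : ℝ) := by exact_mod_cast hC s
    have hpos : (0:ℝ) < (nT s : ℝ) + (nC s : ℝ) := by positivity
    field_simp
    ring
  have hrw : (fun ω => Rebar.tauM m nT nC yhat (Z ω))
      = fun ω => ∑ s, Rebar.w nT s * Rebar.tdiff m nT nC yhat (Z ω) s := rfl
  rw [hrw, MeasureTheory.integral_finset_sum _ (fun s _ => (htint s).const_mul _)]
  simp [integral_const_mul, htzero]
end
end

section
/- (Proposition 2.) Under perfect matching, the rebar estimator is unbiased for the expected effect of the treatment on the treated: if P_i = P_j whenever m(i) = m(j), then E[τ̂_rebar] = τ_ETT. -/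
open MeasureTheory Finset

noncomputable section

/-- Proposition 2: Under perfect matching, the rebar estimator
is unbiased for the expected effect of the treatment on the treated:
`E[τ̂_rebar] = τ_ETT`. -/
theorem stmt8 {n : ℕ} {S : Type*} [Fintype S] [DecidableEq S] [Nonempty S]
    (m : Fin n → S) (nT nC : S → ℕ)
    (hT : ∀ s, 0 < nT s) (hC : ∀ s, 0 < nC s)
    (hsize : ∀ s, nT s + nC s = (Rebar.mSet m s).card)
    {Ω : Type*} [MeasurableSpace Ω] (μ : Measure Ω) [IsProbabilityMeasure μ]
    (Z : Ω → Fin n → ℝ)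
    (hZmeas : ∀ i, Measurable fun ω => Z ω i)
    (hZ01 : ∀ ω i, Z ω i = 0 ∨ Z ω i = 1)
    (hZsum : ∀ᵐ ω ∂μ, ∀ s, ∑ i ∈ Rebar.mSet m s, Z ω i = (nT s : ℝ))
    (hperf : ∀ i j, m i = m j → Rebar.Pr μ Z i = Rebar.Pr μ Z j)
    (yT yC yhat : Fin n → ℝ) :
    ∫ ω, Rebar.tauM m nT nC
        (fun i => Rebar.Yobs yT yC (Z ω) i - yhat i) (Z ω) ∂μ
      = Rebar.tauETT μ Z yT yC nT := by
  classical
  -- Basic measurability and integrability of Z_i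
  have hZind : ∀ i, (fun ω => Z ω i) = Set.indicator {ω | Z ω i = 1} (fun _ => (1:ℝ)) := by
    intro i; funext ω
    rcases hZ01 ω i with h | h <;> simp [Set.indicator_apply, h]
  have hmeasset : ∀ i, MeasurableSet {ω | Z ω i = 1} := fun i =>
    (hZmeas i) (measurableSet_singleton 1)
  have hZint : ∀ i, Integrable (fun ω => Z ω i) μ := by
    intro i; rw [hZind i]
    exact (integrable_indicator_iff (hmeasset i)).2
      ((integrableOn_const_iff enorm_ne_top).2 (Or.inr (measure_lt_top μ _)))
  have hint0 : ∀ i (c : ℝ), Integrable (fun ω => (1 - Z ω i) * c) μ := by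
    intro i c
    exact ((integrable_const (1:ℝ)).sub (hZint i)).mul_const _
  have hZexp : ∀ i, ∫ ω, Z ω i ∂μ = Rebar.Pr μ Z i := by
    intro i
    rw [hZind i, integral_indicator_const _ (hmeasset i)]
    simp [Rebar.Pr, Measure.real]
  -- sum of probabilities within a matched set
  have hPrsum : ∀ s, ∑ i ∈ Rebar.mSet m s, Rebar.Pr μ Z i = (nT s : ℝ) := by
    intro s
    have h1 : ∫ ω, (∑ i ∈ Rebar.mSet m s, Z ω i) ∂μ
        = ∑ i ∈ Rebar.mSet m s, Rebar.Pr μ Z i := by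
      rw [integral_finset_sum _ fun i _ => hZint i]
      exact Finset.sum_congr rfl fun i _ => hZexp i
    rw [← h1]
    have hae : (fun ω => ∑ i ∈ Rebar.mSet m s, Z ω i) =ᵐ[μ] fun _ => (nT s : ℝ) :=
      hZsum.mono fun ω h => h s
    rw [integral_congr_ae hae, integral_const, probReal_univ]
    simp
  have hcard : ∀ s, ((Rebar.mSet m s).card : ℝ) = (nT s : ℝ) + (nC s : ℝ) := by
    intro s; rw [← hsize s]; push_cast; ring
  have hNpos : ∀ s, (0:ℝ) < (nT s : ℝ) + (nC s : ℝ) := by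
    intro s
    have h1 : (0:ℝ) < (nT s : ℝ) := by exact_mod_cast hT s
    have h2 : (0:ℝ) < (nC s : ℝ) := by exact_mod_cast hC s
    linarith
  have hPrval : ∀ s, ∀ i ∈ Rebar.mSet m s,
      Rebar.Pr μ Z i = (nT s : ℝ) / ((nT s : ℝ) + (nC s : ℝ)) := by
    intro s i hi
    have hmi : m i = s := by simpa [Rebar.mSet] using hi
    have hall : ∀ j ∈ Rebar.mSet m s, Rebar.Pr μ Z j = Rebar.Pr μ Z i := by
      intro j hj
      have hmj : m j = s := by simpa [Rebar.mSet] using hj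
      exact hperf j i (hmj.trans hmi.symm)
    have hsum := hPrsum s
    rw [Finset.sum_congr rfl hall, Finset.sum_const, nsmul_eq_mul, hcard s] at hsum
    have hne : (nT s : ℝ) + (nC s : ℝ) ≠ 0 := (hNpos s).ne'
    field_simp
    linarith [hsum]
  -- pointwise rewrite of the integrand
  have hpt : ∀ ω, Rebar.tauM m nT nC
      (fun i => Rebar.Yobs yT yC (Z ω) i - yhat i) (Z ω)
      = ∑ s, Rebar.w nT s *
          ((1 / (nT s : ℝ)) * ∑ i ∈ Rebar.mSet m s, Z ω i * (yT i - yhat i)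
            - (1 / (nC s : ℝ)) * ∑ i ∈ Rebar.mSet m s, (1 - Z ω i) * (yC i - yhat i)) := by
    intro ω
    refine Finset.sum_congr rfl fun s _ => ?_
    congr 1
    unfold Rebar.tdiff
    congr 2
    · exact Finset.sum_congr rfl fun i _ => by
        rcases hZ01 ω i with h | h <;> simp [Rebar.Yobs, h]
    · exact Finset.sum_congr rfl fun i _ => by
        rcases hZ01 ω i with h | h <;> simp [Rebar.Yobs, h]
  -- integrability of the rewritten terms
  have hint1 : ∀ s, Integrable (fun ω => Rebar.w nT s *
      ((1 / (nT s : ℝ)) * ∑ i ∈ Rebar.mSet m s, Z ω i * (yT i - yhat i)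
        - (1 / (nC s : ℝ)) * ∑ i ∈ Rebar.mSet m s, (1 - Z ω i) * (yC i - yhat i))) μ := by
    intro s
    apply Integrable.const_mul
    apply Integrable.sub
    · exact (integrable_finset_sum _ fun i _ => (hZint i).mul_const _).const_mul _
    · exact (integrable_finset_sum _ fun i _ => hint0 i _).const_mul _
  have hintA : ∀ s, Integrable (fun ω =>
      (1 / (nT s : ℝ)) * ∑ i ∈ Rebar.mSet m s, Z ω i * (yT i - yhat i)) μ :=
    fun s => (integrable_finset_sum _ fun i _ => (hZint i).mul_const _).const_mul _
  have hintB : ∀ s, Integrable (fun ω =>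
      (1 / (nC s : ℝ)) * ∑ i ∈ Rebar.mSet m s, (1 - Z ω i) * (yC i - yhat i)) μ :=
    fun s => (integrable_finset_sum _ fun i _ => hint0 i _).const_mul _
  have hnTtot : (0:ℝ) < (Rebar.nTtot nT : ℝ) := by
    have : 0 < Rebar.nTtot nT := Finset.sum_pos (fun s _ => hT s) Finset.univ_nonempty
    exact_mod_cast this
  -- expected value of each matched-set term
  have hEs : ∀ s, ∫ ω, (Rebar.w nT s *
      ((1 / (nT s : ℝ)) * ∑ i ∈ Rebar.mSet m s, Z ω i * (yT i - yhat i)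
        - (1 / (nC s : ℝ)) * ∑ i ∈ Rebar.mSet m s, (1 - Z ω i) * (yC i - yhat i))) ∂μ
      = (1 / (Rebar.nTtot nT : ℝ)) *
          ∑ i ∈ Rebar.mSet m s, (yT i - yC i) * Rebar.Pr μ Z i := by
    intro s
    rw [integral_const_mul, integral_sub (hintA s) (hintB s),
      integral_const_mul, integral_const_mul,
      integral_finset_sum _ (fun i _ => (hZint i).mul_const _),
      integral_finset_sum _ (fun i _ => hint0 i _)]
    have e1 : ∀ i ∈ Rebar.mSet m s, ∫ ω, Z ω i * (yT i - yhat i) ∂μ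
        = ((nT s : ℝ) / ((nT s : ℝ) + (nC s : ℝ))) * (yT i - yhat i) := by
      intro i hi
      rw [integral_mul_const, hZexp i, hPrval s i hi]
    have e2 : ∀ i ∈ Rebar.mSet m s, ∫ ω, (1 - Z ω i) * (yC i - yhat i) ∂μ
        = ((nC s : ℝ) / ((nT s : ℝ) + (nC s : ℝ))) * (yC i - yhat i) := by
      intro i hi
      rw [integral_mul_const, integral_sub (integrable_const 1) (hZint i),
        integral_const, probReal_univ, smul_eq_mul, hZexp i, hPrval s i hi]
      have hne : (nT s : ℝ) + (nC s : ℝ) ≠ 0 := (hNpos s).ne'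
      field_simp
      ring
    have e3 : ∀ i ∈ Rebar.mSet m s, (yT i - yC i) * Rebar.Pr μ Z i
        = ((nT s : ℝ) / ((nT s : ℝ) + (nC s : ℝ))) * (yT i - yC i) := by
      intro i hi
      rw [hPrval s i hi]; ring
    rw [Finset.sum_congr rfl e1, Finset.sum_congr rfl e2, Finset.sum_congr rfl e3]
    rw [← Finset.mul_sum, ← Finset.mul_sum, ← Finset.mul_sum]
    have hAB : ∑ i ∈ Rebar.mSet m s, (yT i - yC i)
        = (∑ i ∈ Rebar.mSet m s, (yT i - yhat i))
          - ∑ i ∈ Rebar.mSet m s, (yC i - yhat i) := by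
      rw [← Finset.sum_sub_distrib]
      exact Finset.sum_congr rfl fun i _ => by ring
    rw [hAB]
    have hne : (nT s : ℝ) + (nC s : ℝ) ≠ 0 := (hNpos s).ne'
    have hnT : (nT s : ℝ) ≠ 0 := by
      have : (0:ℝ) < (nT s : ℝ) := by exact_mod_cast hT s
      exact this.ne'
    have hnC : (nC s : ℝ) ≠ 0 := by
      have : (0:ℝ) < (nC s : ℝ) := by exact_mod_cast hC s
      exact this.ne'
    unfold Rebar.w
    field_simp
  -- putting everything together
  rw [integral_congr_ae (Filter.Eventually.of_forall hpt),
    integral_finset_sum _ (fun s _ => hint1 s)]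
  rw [Finset.sum_congr rfl fun s _ => hEs s]
  rw [← Finset.mul_sum]
  unfold Rebar.tauETT
  simp only [Rebar.mSet]
  rw [Finset.sum_fiberwise Finset.univ m (fun i => (yT i - yC i) * Rebar.Pr μ Z i)]
  ring
end
end

section
/- The bias of the rebar estimator equals the prediction-error analogue of the matching-estimator bias formula: E[τ̂_rebar] − τ_ETT = Σ_{s∈S} w_s · Σ_{i : m(i)=s} (y_C(i) − ŷ_C(i))·(P_i/n_T(s) − (1−P_i)/n_C(s)). -/
open MeasureTheory Finset

noncomputable section

/-- The bias of the rebar estimator equals the prediction-error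
analogue of the matching-estimator bias formula:
`E[τ̂_rebar] - τ_ETT
  = Σ_s w_s Σ_{i : m(i)=s} (y_C(i) - ŷ_C(i)) (P_i/n_T(s) - (1-P_i)/n_C(s))`. -/
theorem stmt9 {n : ℕ} {S : Type*} [Fintype S] [DecidableEq S] [Nonempty S]
    (m : Fin n → S) (nT nC : S → ℕ)
    (hT : ∀ s, 0 < nT s) (hC : ∀ s, 0 < nC s)
    (hsize : ∀ s, nT s + nC s = (Rebar.mSet m s).card)
    {Ω : Type*} [MeasurableSpace Ω] (μ : Measure Ω) [IsProbabilityMeasure μ]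
    (Z : Ω → Fin n → ℝ)
    (hZmeas : ∀ i, Measurable fun ω => Z ω i)
    (hZ01 : ∀ ω i, Z ω i = 0 ∨ Z ω i = 1)
    (hZsum : ∀ᵐ ω ∂μ, ∀ s, ∑ i ∈ Rebar.mSet m s, Z ω i = (nT s : ℝ))
    (yT yC yhat : Fin n → ℝ) :
    (∫ ω, Rebar.tauM m nT nC
          (fun i => Rebar.Yobs yT yC (Z ω) i - yhat i) (Z ω) ∂μ)
        - Rebar.tauETT μ Z yT yC nT
      = ∑ s, Rebar.w nT s *
          ∑ i ∈ Rebar.mSet m s, (yC i - yhat i) *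
            (Rebar.Pr μ Z i / (nT s : ℝ) - (1 - Rebar.Pr μ Z i) / (nC s : ℝ)) := by
  classical
  have hTne : ∀ s, (nT s : ℝ) ≠ 0 := fun s => Nat.cast_ne_zero.2 (hT s).ne'
  have hCne : ∀ s, (nC s : ℝ) ≠ 0 := fun s => Nat.cast_ne_zero.2 (hC s).ne'
  have hTot : (Rebar.nTtot nT : ℝ) ≠ 0 := by
    have : 0 < Rebar.nTtot nT := by
      obtain ⟨s⟩ := ‹Nonempty S›
      exact Finset.sum_pos (fun s _ => hT s) ⟨s, Finset.mem_univ s⟩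
    exact_mod_cast this.ne'
  have hset : ∀ i, MeasurableSet {ω | Z ω i = 1} := fun i =>
    (hZmeas i) (measurableSet_singleton 1)
  have hind : ∀ i, (fun ω => Z ω i) = Set.indicator {ω | Z ω i = 1} (fun _ => (1:ℝ)) := by
    intro i; funext ω
    rcases hZ01 ω i with h | h <;> simp [Set.indicator, h]
  have hZint : ∀ i, Integrable (fun ω => Z ω i) μ := by
    intro i; rw [hind i]
    exact (integrable_const 1).indicator (hset i)
  have hZval : ∀ i, ∫ ω, Z ω i ∂μ = Rebar.Pr μ Z i := by
    intro i
    rw [hind i, MeasureTheory.integral_indicator_const _ (hset i)]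
    simp [Rebar.Pr]
    rfl
  have hpt : ∀ ω, Rebar.tauM m nT nC (fun i => Rebar.Yobs yT yC (Z ω) i - yhat i) (Z ω)
      = ∑ s, Rebar.w nT s *
          ((1 / (nT s : ℝ)) * ∑ i ∈ Rebar.mSet m s, (yT i - yhat i) * Z ω i
           - (1 / (nC s : ℝ)) * ∑ i ∈ Rebar.mSet m s, (yC i - yhat i) * (1 - Z ω i)) := by
    intro ω
    unfold Rebar.tauM Rebar.tdiff
    refine Finset.sum_congr rfl fun s _ => ?_
    congr 2
    · congr 1
      refine Finset.sum_congr rfl fun i _ => ?_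
      rcases hZ01 ω i with h | h <;> simp [Rebar.Yobs, h]
    · congr 1
      refine Finset.sum_congr rfl fun i _ => ?_
      rcases hZ01 ω i with h | h <;> simp [Rebar.Yobs, h]
  have hintA : ∀ s, Integrable
      (fun ω => (1 / (nT s : ℝ)) * ∑ i ∈ Rebar.mSet m s, (yT i - yhat i) * Z ω i) μ :=
    fun s => ((integrable_finset_sum _ (fun i _ => (hZint i).const_mul _)).const_mul _)
  have hintB : ∀ s, Integrable
      (fun ω => (1 / (nC s : ℝ)) * ∑ i ∈ Rebar.mSet m s, (yC i - yhat i) * (1 - Z ω i)) μ :=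
    fun s => ((integrable_finset_sum _
      (fun i _ => (((integrable_const (1:ℝ)).sub (hZint i)).const_mul _))).const_mul _)
  have hA : ∀ i : Fin n, ∫ ω, (yT i - yhat i) * Z ω i ∂μ
      = (yT i - yhat i) * Rebar.Pr μ Z i := by
    intro i; rw [MeasureTheory.integral_const_mul, hZval]
  have hB : ∀ i : Fin n, ∫ ω, (yC i - yhat i) * (1 - Z ω i) ∂μ
      = (yC i - yhat i) * (1 - Rebar.Pr μ Z i) := by
    intro i
    rw [MeasureTheory.integral_const_mul,
      MeasureTheory.integral_sub (integrable_const 1) (hZint i), hZval]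
    simp
  have hone : ∀ i : Fin n, Integrable (fun ω => (1:ℝ) - Z ω i) μ := by
    intro i; exact (integrable_const 1).sub (hZint i)
  have hintAB : ∀ s, Integrable (fun ω => Rebar.w nT s *
      ((1 / (nT s : ℝ)) * ∑ i ∈ Rebar.mSet m s, (yT i - yhat i) * Z ω i
       - (1 / (nC s : ℝ)) * ∑ i ∈ Rebar.mSet m s, (yC i - yhat i) * (1 - Z ω i))) μ := by
    intro s
    exact ((hintA s).sub (hintB s)).const_mul _
  have hInt : (∫ ω, Rebar.tauM m nT nC
        (fun i => Rebar.Yobs yT yC (Z ω) i - yhat i) (Z ω) ∂μ)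
      = ∑ s, Rebar.w nT s *
          ((1 / (nT s : ℝ)) * ∑ i ∈ Rebar.mSet m s, (yT i - yhat i) * Rebar.Pr μ Z i
           - (1 / (nC s : ℝ)) * ∑ i ∈ Rebar.mSet m s,
              (yC i - yhat i) * (1 - Rebar.Pr μ Z i)) := by
    simp only [hpt]
    rw [MeasureTheory.integral_finset_sum _ (fun s _ => hintAB s)]
    refine Finset.sum_congr rfl fun s _ => ?_
    rw [MeasureTheory.integral_const_mul,
      MeasureTheory.integral_sub (hintA s) (hintB s),
      MeasureTheory.integral_const_mul, MeasureTheory.integral_const_mul,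
      MeasureTheory.integral_finset_sum _ (fun i _ => (hZint i).const_mul _),
      MeasureTheory.integral_finset_sum _ (fun i _ => ((hone i).const_mul _))]
    simp only [hA, hB]
  rw [hInt, Rebar.tauETT,
    ← Finset.sum_fiberwise Finset.univ m (fun i => (yT i - yC i) * Rebar.Pr μ Z i),
    Finset.sum_div, ← Finset.sum_sub_distrib]
  refine Finset.sum_congr rfl fun s _ => ?_
  show _ - (∑ i ∈ Rebar.mSet m s, (yT i - yC i) * Rebar.Pr μ Z i) / _ = _
  simp only [Rebar.w, Finset.mul_sum, Finset.sum_div, mul_sub, ← Finset.sum_sub_distrib]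
  refine Finset.sum_congr rfl fun i _ => ?_
  have h1 := hTne s
  have h2 := hCne s
  field_simp
  ring
end
end

section
/- (Proposition 3, MSE form.) The squared bias of the rebar estimator is bounded by the mean squared prediction error in the matched sample times a design constant: (E[τ̂_rebar] − τ_ETT)² ≤ MSE_M · C(n, n_T, n_C). -/
open MeasureTheory Finset

noncomputable section

section Aux
variable {n : ℕ} {S : Type*} [Fintype S] [DecidableEq S]

lemma aux_partition (m : Fin n → S) (f : Fin n → ℝ) :
    ∑ s, ∑ i ∈ Rebar.mSet m s, f i = ∑ i, f i := by
  simpa [Rebar.mSet] using Finset.sum_fiberwise Finset.univ m f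

lemma aux_mem (m : Fin n → S) {s : S} {i : Fin n} (h : i ∈ Rebar.mSet m s) :
    m i = s := by simpa [Rebar.mSet] using h

lemma aux_scalar (P T C N yt yc yh : ℝ) (hT : T ≠ 0) (hC : C ≠ 0) (hN : N ≠ 0) :
    P * (T / N * ((yt - yh) / T + (yc - yh) / C)) + -(T / N * (yc - yh) / C)
      - (yt - yc) * P / N
      = (yh - yc) * (((1 - P) * T / C - P) / N) := by
  field_simp
  ring

end Aux


/-- Proposition 3, MSE form: the squared bias of the rebar
estimator is bounded by `MSE_M · C(n, n_T, n_C)`. -/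
theorem stmt12 {n : ℕ} {S : Type*} [Fintype S] [DecidableEq S] [Nonempty S]
    (m : Fin n → S) (nT nC : S → ℕ)
    (hT : ∀ s, 0 < nT s) (hC : ∀ s, 0 < nC s)
    (hsize : ∀ s, nT s + nC s = (Rebar.mSet m s).card)
    {Ω : Type*} [MeasurableSpace Ω] (μ : Measure Ω) [IsProbabilityMeasure μ]
    (Z : Ω → Fin n → ℝ)
    (hZmeas : ∀ i, Measurable fun ω => Z ω i)
    (hZ01 : ∀ ω i, Z ω i = 0 ∨ Z ω i = 1)
    (hZsum : ∀ᵐ ω ∂μ, ∀ s, ∑ i ∈ Rebar.mSet m s, Z ω i = (nT s : ℝ))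
    (yT yC yhat : Fin n → ℝ) :
    ((∫ ω, Rebar.tauM m nT nC
          (fun i => Rebar.Yobs yT yC (Z ω) i - yhat i) (Z ω) ∂μ)
        - Rebar.tauETT μ Z yT yC nT) ^ 2
      ≤ Rebar.MSE yC yhat * Rebar.Cdesign n nT nC := by
  classical
  have hNTpos : 0 < (Rebar.nTtot nT : ℝ) := by
    have : 0 < Rebar.nTtot nT :=
      Finset.sum_pos (fun s _ => hT s) Finset.univ_nonempty
    exact_mod_cast this
  have hNTne : (Rebar.nTtot nT : ℝ) ≠ 0 := ne_of_gt hNTpos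
  have hTne : ∀ s, (nT s : ℝ) ≠ 0 := fun s => by
    exact_mod_cast (hT s).ne'
  have hCne : ∀ s, (nC s : ℝ) ≠ 0 := fun s => by
    exact_mod_cast (hC s).ne'
  -- probabilities
  have hP0 : ∀ i, 0 ≤ Rebar.Pr μ Z i := fun i => ENNReal.toReal_nonneg
  have hP1 : ∀ i, Rebar.Pr μ Z i ≤ 1 := by
    intro i
    have h := prob_le_one (μ := μ) (s := {ω | Z ω i = 1})
    have := ENNReal.toReal_mono (by simp) h
    simpa [Rebar.Pr] using this
  -- integrability and value of ∫ Z_i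
  have hAmeas : ∀ i : Fin n, MeasurableSet {ω | Z ω i = 1} := fun i =>
    (hZmeas i) (measurableSet_singleton 1)
  have hZind : ∀ i : Fin n, (fun ω => Z ω i)
      = Set.indicator {ω | Z ω i = 1} (fun _ => (1:ℝ)) := by
    intro i; funext ω
    rcases hZ01 ω i with h | h <;> simp [Set.indicator, h]
  have hZint : ∀ i : Fin n, Integrable (fun ω => Z ω i) μ := by
    intro i; rw [hZind i]; exact (integrable_const 1).indicator (hAmeas i)
  have hZval : ∀ i : Fin n, ∫ ω, Z ω i ∂μ = Rebar.Pr μ Z i := by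
    intro i
    rw [hZind i, integral_indicator_const (1:ℝ) (hAmeas i), smul_eq_mul, mul_one]
    rfl
  -- coefficients
  set A : Fin n → ℝ := fun i =>
    Rebar.w nT (m i) * ((yT i - yhat i) / (nT (m i) : ℝ)
      + (yC i - yhat i) / (nC (m i) : ℝ)) with hA
  set B : Fin n → ℝ := fun i =>
    -(Rebar.w nT (m i) * (yC i - yhat i) / (nC (m i) : ℝ)) with hB
  -- pointwise identity
  have hpt : ∀ ω, Rebar.tauM m nT nC
      (fun i => Rebar.Yobs yT yC (Z ω) i - yhat i) (Z ω)
      = ∑ i, (Z ω i * A i + B i) := by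
    intro ω
    rw [← aux_partition m (fun i => Z ω i * A i + B i)]
    unfold Rebar.tauM Rebar.tdiff
    refine Finset.sum_congr rfl fun s _ => ?_
    simp only [mul_sub, Finset.mul_sum, ← Finset.sum_sub_distrib]
    refine Finset.sum_congr rfl fun i hi => ?_
    have hms : m i = s := aux_mem m hi
    rcases hZ01 ω i with h | h <;>
      simp only [hA, hB, Rebar.Yobs, hms, h] <;> ring
  -- integral value
  have hint : ∀ i : Fin n, Integrable (fun ω => Z ω i * A i + B i) μ := fun i =>
    ((hZint i).mul_const (A i)).add (integrable_const (B i))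
  have hI : (∫ ω, Rebar.tauM m nT nC
      (fun i => Rebar.Yobs yT yC (Z ω) i - yhat i) (Z ω) ∂μ)
      = ∑ i, (Rebar.Pr μ Z i * A i + B i) := by
    calc (∫ ω, Rebar.tauM m nT nC
        (fun i => Rebar.Yobs yT yC (Z ω) i - yhat i) (Z ω) ∂μ)
        = ∫ ω, ∑ i, (Z ω i * A i + B i) ∂μ := by
          exact integral_congr_ae (Filter.Eventually.of_forall hpt)
      _ = ∑ i, ∫ ω, (Z ω i * A i + B i) ∂μ :=
          integral_finset_sum _ fun i _ => hint i
      _ = ∑ i, (Rebar.Pr μ Z i * A i + B i) := by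
          refine Finset.sum_congr rfl fun i _ => ?_
          rw [integral_add ((hZint i).mul_const (A i)) (integrable_const (B i)),
            integral_mul_const, hZval i, integral_const]
          simp
  -- bias as a single sum
  set d : Fin n → ℝ := fun i => yhat i - yC i with hd
  set a : Fin n → ℝ := fun i =>
    ((1 - Rebar.Pr μ Z i) * (nT (m i) : ℝ) / (nC (m i) : ℝ) - Rebar.Pr μ Z i)
      / (Rebar.nTtot nT : ℝ) with ha
  have hbias : (∫ ω, Rebar.tauM m nT nC
      (fun i => Rebar.Yobs yT yC (Z ω) i - yhat i) (Z ω) ∂μ)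
      - Rebar.tauETT μ Z yT yC nT = ∑ i, d i * a i := by
    rw [hI]
    unfold Rebar.tauETT
    rw [Finset.sum_div, ← Finset.sum_sub_distrib]
    refine Finset.sum_congr rfl fun i _ => ?_
    simp only [hA, hB, hd, ha, Rebar.w]
    exact aux_scalar (Rebar.Pr μ Z i) _ _ _ (yT i) (yC i) (yhat i)
      (hTne (m i)) (hCne (m i)) hNTne
  rw [hbias]
  -- Cauchy–Schwarz
  have hcs := Finset.sum_mul_sq_le_sq_mul_sq Finset.univ d a
  -- bound on ∑ a²
  have hterm : ∀ i : Fin n, a i ^ 2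
      ≤ (max 1 ((nT (m i) : ℝ) / (nC (m i) : ℝ))) ^ 2 / (Rebar.nTtot nT : ℝ) ^ 2 := by
    intro i
    have hr0 : (0:ℝ) ≤ (nT (m i) : ℝ) / (nC (m i) : ℝ) := by positivity
    have hP0i := hP0 i
    have hP1i := hP1 i
    have hm1 := le_max_left (1:ℝ) ((nT (m i) : ℝ) / (nC (m i) : ℝ))
    have hm2 := le_max_right (1:ℝ) ((nT (m i) : ℝ) / (nC (m i) : ℝ))
    have hnn : (0:ℝ) ≤ (1 - Rebar.Pr μ Z i) * ((nT (m i) : ℝ) / (nC (m i) : ℝ)) :=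
      mul_nonneg (by linarith) hr0
    have hpn : (0:ℝ) ≤ Rebar.Pr μ Z i * ((nT (m i) : ℝ) / (nC (m i) : ℝ)) :=
      mul_nonneg hP0i hr0
    have hv : ((1 - Rebar.Pr μ Z i) * ((nT (m i) : ℝ) / (nC (m i) : ℝ))
        - Rebar.Pr μ Z i) ^ 2
        ≤ (max 1 ((nT (m i) : ℝ) / (nC (m i) : ℝ))) ^ 2 := by
      apply sq_le_sq'
      · nlinarith
      · nlinarith
    have heq : a i ^ 2 = ((1 - Rebar.Pr μ Z i) * ((nT (m i) : ℝ) / (nC (m i) : ℝ))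
        - Rebar.Pr μ Z i) ^ 2 / (Rebar.nTtot nT : ℝ) ^ 2 := by
      simp only [ha, div_pow, mul_div_assoc]
    rw [heq]
    gcongr
  have hsumM : ∑ i, (max 1 ((nT (m i) : ℝ) / (nC (m i) : ℝ))) ^ 2
      = ∑ s, ((nT s : ℝ) + (nC s : ℝ)) * (max 1 ((nT s : ℝ) / (nC s : ℝ))) ^ 2 := by
    rw [← aux_partition m (fun i => (max 1 ((nT (m i) : ℝ) / (nC (m i) : ℝ))) ^ 2)]
    refine Finset.sum_congr rfl fun s _ => ?_
    rw [Finset.sum_congr rfl (fun i hi => by rw [aux_mem m hi]),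
      Finset.sum_const, nsmul_eq_mul, ← hsize s]
    push_cast
    ring
  have hasum : ∑ i, a i ^ 2
      ≤ (∑ s, ((nT s : ℝ) + (nC s : ℝ)) * (max 1 ((nT s : ℝ) / (nC s : ℝ))) ^ 2)
        / (Rebar.nTtot nT : ℝ) ^ 2 := by
    rw [← hsumM, Finset.sum_div]
    exact Finset.sum_le_sum fun i _ => hterm i
  have hdnn : (0:ℝ) ≤ ∑ i, d i ^ 2 := Finset.sum_nonneg fun i _ => sq_nonneg _
  have hfinal : (∑ i, d i ^ 2) * ∑ i, a i ^ 2
      ≤ Rebar.MSE yC yhat * Rebar.Cdesign n nT nC := by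
    rcases Nat.eq_zero_or_pos n with hn | hn
    · subst hn
      simp [Rebar.MSE, Rebar.Cdesign]
    · have hne : (n:ℝ) ≠ 0 := by exact_mod_cast hn.ne'
      have : Rebar.MSE yC yhat * Rebar.Cdesign n nT nC
          = (∑ i, d i ^ 2) *
            ((∑ s, ((nT s : ℝ) + (nC s : ℝ))
              * (max 1 ((nT s : ℝ) / (nC s : ℝ))) ^ 2) / (Rebar.nTtot nT : ℝ) ^ 2) := by
        simp only [Rebar.MSE, Rebar.Cdesign, hd]
        field_simp
      rw [this]
      exact mul_le_mul_of_nonneg_left hasum hdnn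
  exact hcs.trans hfinal
end
end

section
/- (Proposition 3, R² form.) If Σ_{i=1}^n (y_C(i) − ȳ_C)² > 0, then the squared bias of the rebar estimator, standardized by the sample standard deviation of the control potential outcomes, satisfies ((E[τ̂_rebar] − τ_ETT)/SD(y_C))² ≤ (1 − R²_M) · C(n, n_T, n_C). -/
open MeasureTheory Finset

noncomputable section

/- Auxiliary lemmas -/

lemma per_i_alg (N a b : ℝ) (hN : N ≠ 0) (ha : a ≠ 0) (hb : b ≠ 0) (d t p : ℝ) :
    ((-((a/N) * d / b)) + ((a/N) * ((d + t)/a + d/b)) * p) - t * p / N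
      = ((a/N) * (p/a - (1-p)/b)) * d := by
  field_simp
  ring

lemma coef_bound' (N a b p : ℝ) (hN : 0 < N) (ha : 0 < a) (hb : 0 < b)
    (hp0 : 0 ≤ p) (hp1 : p ≤ 1) :
    ((a/N) * (p/a - (1-p)/b)) ^ 2 ≤ (max 1 (a/b) / N) ^ 2 := by
  have hbN : (0:ℝ) < b * N := mul_pos hb hN
  have hc2 : ((a/N) * (p/a - (1-p)/b)) ^ 2 = (p*b - a*(1-p))^2 / (b*N)^2 := by
    field_simp
  have hm : max 1 (a/b) = max b a / b := by
    rw [← div_self hb.ne', ← max_div_div_right hb.le b a, div_self hb.ne']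
  have hK2 : (max 1 (a/b) / N) ^ 2 = (max b a)^2 / (b*N)^2 := by
    rw [hm, div_div, div_pow]
  rw [hc2, hK2]
  have h1 : p*b - a*(1-p) ≤ max b a := by
    nlinarith [le_max_left b a, mul_nonneg ha.le (sub_nonneg.2 hp1),
      mul_nonneg (sub_nonneg.2 hp1) hb.le]
  have h2 : -(max b a) ≤ p*b - a*(1-p) := by
    nlinarith [le_max_right b a, mul_nonneg hp0 hb.le, mul_nonneg hp0 ha.le]
  exact div_le_div_of_nonneg_right (sq_le_sq' h2 h1) (pow_pos hbN 2).le

lemma rebar_pointwise {n : ℕ} {S : Type*} [Fintype S] [DecidableEq S]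
    (m : Fin n → S) (nT nC : S → ℕ) (d t : Fin n → ℝ) (z : Fin n → ℝ)
    (hz : ∀ i, z i = 0 ∨ z i = 1) :
    Rebar.tauM m nT nC (fun i => d i + z i * t i) z
      = ∑ i, ((-(Rebar.w nT (m i) * d i / (nC (m i) : ℝ)))
          + (Rebar.w nT (m i) * ((d i + t i) / (nT (m i) : ℝ) + d i / (nC (m i) : ℝ))) * z i) := by
  unfold Rebar.tauM Rebar.tdiff
  calc ∑ s, Rebar.w nT s *
        ((1 / (nT s : ℝ)) * ∑ i ∈ Rebar.mSet m s, (d i + z i * t i) * z i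
          - (1 / (nC s : ℝ)) * ∑ i ∈ Rebar.mSet m s, (d i + z i * t i) * (1 - z i))
      = ∑ s, ∑ i ∈ Rebar.mSet m s,
          ((-(Rebar.w nT (m i) * d i / (nC (m i) : ℝ)))
            + (Rebar.w nT (m i) * ((d i + t i) / (nT (m i) : ℝ) + d i / (nC (m i) : ℝ))) * z i) := by
        refine Finset.sum_congr rfl fun s _ => ?_
        have h1 : ∑ i ∈ Rebar.mSet m s, (d i + z i * t i) * z i
            = ∑ i ∈ Rebar.mSet m s, (d i + t i) * z i := by
          refine Finset.sum_congr rfl fun i _ => ?_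
          rcases hz i with h | h <;> rw [h] <;> ring
        have h2 : ∑ i ∈ Rebar.mSet m s, (d i + z i * t i) * (1 - z i)
            = ∑ i ∈ Rebar.mSet m s, d i * (1 - z i) := by
          refine Finset.sum_congr rfl fun i _ => ?_
          rcases hz i with h | h <;> rw [h] <;> ring
        rw [h1, h2, Finset.mul_sum, Finset.mul_sum, ← Finset.sum_sub_distrib,
          Finset.mul_sum]
        refine Finset.sum_congr rfl fun i hi => ?_
        have hm : m i = s := by simpa [Rebar.mSet] using hi
        rw [hm]; ring
    _ = _ := Finset.sum_fiberwise _ _ _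

/-- Proposition 3, R² form: if `Σ_i (y_C(i) - ȳ_C)² > 0` then
`((E[τ̂_rebar] - τ_ETT)/SD(y_C))² ≤ (1 - R²_M) · C(n, n_T, n_C)`. -/
theorem stmt13 {n : ℕ} {S : Type*} [Fintype S] [DecidableEq S] [Nonempty S]
    (m : Fin n → S) (nT nC : S → ℕ)
    (hT : ∀ s, 0 < nT s) (hC : ∀ s, 0 < nC s)
    (hsize : ∀ s, nT s + nC s = (Rebar.mSet m s).card)
    {Ω : Type*} [MeasurableSpace Ω] (μ : Measure Ω) [IsProbabilityMeasure μ]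
    (Z : Ω → Fin n → ℝ)
    (hZmeas : ∀ i, Measurable fun ω => Z ω i)
    (hZ01 : ∀ ω i, Z ω i = 0 ∨ Z ω i = 1)
    (hZsum : ∀ᵐ ω ∂μ, ∀ s, ∑ i ∈ Rebar.mSet m s, Z ω i = (nT s : ℝ))
    (yT yC yhat : Fin n → ℝ)
    (hvar : 0 < ∑ i, (yC i - (1 / (n : ℝ)) * ∑ j, yC j) ^ 2) :
    (((∫ ω, Rebar.tauM m nT nC
            (fun i => Rebar.Yobs yT yC (Z ω) i - yhat i) (Z ω) ∂μ)
          - Rebar.tauETT μ Z yT yC nT)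
        / Real.sqrt ((1 / (n : ℝ)) *
            ∑ i, (yC i - (1 / (n : ℝ)) * ∑ j, yC j) ^ 2)) ^ 2
      ≤ (1 - (1 - (∑ i, (yC i - yhat i) ^ 2)
                    / ∑ i, (yC i - (1 / (n : ℝ)) * ∑ j, yC j) ^ 2))
          * Rebar.Cdesign n nT nC := by
  classical
  have hNnat : 0 < Rebar.nTtot nT :=
    Finset.sum_pos (fun s _ => hT s) Finset.univ_nonempty
  set N : ℝ := ((Rebar.nTtot nT : ℕ) : ℝ) with hNdef
  have hNpos : (0:ℝ) < N := by rw [hNdef]; exact_mod_cast hNnat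
  have hn : 0 < n := by
    rcases Nat.eq_zero_or_pos n with h | h
    · subst h; simp at hvar
    · exact h
  have hnR : (0:ℝ) < (n:ℝ) := by exact_mod_cast hn
  set d : Fin n → ℝ := fun i => yC i - yhat i with hd
  set t : Fin n → ℝ := fun i => yT i - yC i with ht
  set P : Fin n → ℝ := Rebar.Pr μ Z with hP
  have hP0 : ∀ i, 0 ≤ P i := fun i => ENNReal.toReal_nonneg
  have hP1 : ∀ i, P i ≤ 1 := by
    intro i
    rw [hP]
    unfold Rebar.Pr
    have h := prob_le_one (μ := μ) (s := {ω | Z ω i = 1})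
    calc (μ {ω | Z ω i = 1}).toReal ≤ (1 : ENNReal).toReal :=
          ENNReal.toReal_mono (by simp) h
      _ = 1 := by simp
  -- integrability and integral of Z_i
  have hmeasset : ∀ i, MeasurableSet {ω | Z ω i = 1} := fun i =>
    (hZmeas i) (measurableSet_singleton 1)
  have hZind : ∀ i, (fun ω => Z ω i) = Set.indicator {ω | Z ω i = 1} (fun _ => (1:ℝ)) := by
    intro i; funext ω
    rcases hZ01 ω i with h | h <;> simp [Set.indicator_apply, h]
  have hZint : ∀ i, Integrable (fun ω => Z ω i) μ := fun i => by
    rw [hZind i]; exact (integrable_const 1).indicator (hmeasset i)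
  have hZintegral : ∀ i, ∫ ω, Z ω i ∂μ = P i := fun i => by
    rw [hZind i, integral_indicator (hmeasset i)]
    simp [hP, Rebar.Pr, Measure.restrict_apply]
    rfl
  -- integral of the rebar estimator
  have hint : (∫ ω, Rebar.tauM m nT nC
        (fun i => Rebar.Yobs yT yC (Z ω) i - yhat i) (Z ω) ∂μ)
      = ∑ i, ((-(Rebar.w nT (m i) * d i / (nC (m i) : ℝ)))
          + (Rebar.w nT (m i) * ((d i + t i) / (nT (m i) : ℝ) + d i / (nC (m i) : ℝ))) * P i) := by
    have h1 : ∀ ω, Rebar.tauM m nT nC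
        (fun i => Rebar.Yobs yT yC (Z ω) i - yhat i) (Z ω)
        = ∑ i, ((-(Rebar.w nT (m i) * d i / (nC (m i) : ℝ)))
          + (Rebar.w nT (m i) * ((d i + t i) / (nT (m i) : ℝ) + d i / (nC (m i) : ℝ))) * Z ω i) := by
      intro ω
      have hvec : (fun i => Rebar.Yobs yT yC (Z ω) i - yhat i)
          = fun i => d i + Z ω i * t i := by
        funext i
        simp only [Rebar.Yobs, hd, ht]
        ring
      rw [hvec, rebar_pointwise m nT nC d t (Z ω) (hZ01 ω)]
    rw [integral_congr_ae (Filter.Eventually.of_forall h1)]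
    rw [MeasureTheory.integral_finset_sum (μ := μ) Finset.univ
      (f := fun i ω => (-(Rebar.w nT (m i) * d i / (nC (m i) : ℝ)))
          + (Rebar.w nT (m i) * ((d i + t i) / (nT (m i) : ℝ) + d i / (nC (m i) : ℝ))) * Z ω i)
      (fun i _ => (integrable_const _).add ((hZint i).const_mul _))]
    refine Finset.sum_congr rfl fun i _ => ?_
    rw [integral_add (integrable_const _) ((hZint i).const_mul _),
      integral_const, MeasureTheory.integral_const_mul, hZintegral i]
    simp
  -- bias as a weighted sum of prediction errors
  have hbias : (∑ i, ((-(Rebar.w nT (m i) * d i / (nC (m i) : ℝ)))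
          + (Rebar.w nT (m i) * ((d i + t i) / (nT (m i) : ℝ) + d i / (nC (m i) : ℝ))) * P i))
        - Rebar.tauETT μ Z yT yC nT
      = ∑ i, ((((nT (m i) : ℝ))/N) * (P i/(nT (m i) : ℝ) - (1 - P i)/(nC (m i) : ℝ))) * d i := by
    have hETT : Rebar.tauETT μ Z yT yC nT = ∑ i, t i * P i / N := by
      unfold Rebar.tauETT
      rw [Finset.sum_div]
    rw [hETT, ← Finset.sum_sub_distrib]
    refine Finset.sum_congr rfl fun i _ => ?_
    have ha : ((nT (m i) : ℝ)) ≠ 0 := by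
      exact_mod_cast (hT (m i)).ne'
    have hb : ((nC (m i) : ℝ)) ≠ 0 := by
      exact_mod_cast (hC (m i)).ne'
    have hw : Rebar.w nT (m i) = (nT (m i) : ℝ) / N := rfl
    rw [hw]
    exact per_i_alg N _ _ hNpos.ne' ha hb (d i) (t i) (P i)
  rw [hint, hbias]
  -- bound the squared bias
  have hCS : (∑ i, ((((nT (m i) : ℝ))/N) * (P i/(nT (m i) : ℝ) - (1 - P i)/(nC (m i) : ℝ))) * d i) ^ 2
      ≤ (∑ i, (max 1 ((nT (m i) : ℝ)/(nC (m i) : ℝ)) / N) ^ 2) * ∑ i, d i ^ 2 := by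
    calc (∑ i, ((((nT (m i) : ℝ))/N) * (P i/(nT (m i) : ℝ) - (1 - P i)/(nC (m i) : ℝ))) * d i) ^ 2
        ≤ (∑ i, ((((nT (m i) : ℝ))/N) * (P i/(nT (m i) : ℝ) - (1 - P i)/(nC (m i) : ℝ))) ^ 2)
            * ∑ i, d i ^ 2 := Finset.sum_mul_sq_le_sq_mul_sq _ _ _
      _ ≤ (∑ i, (max 1 ((nT (m i) : ℝ)/(nC (m i) : ℝ)) / N) ^ 2) * ∑ i, d i ^ 2 := by
          refine mul_le_mul_of_nonneg_right ?_ (Finset.sum_nonneg fun i _ => sq_nonneg _)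
          refine Finset.sum_le_sum fun i _ => ?_
          exact coef_bound' N _ _ _ hNpos (by exact_mod_cast hT (m i))
            (by exact_mod_cast hC (m i)) (hP0 i) (hP1 i)
  -- compute the sum of the bound coefficients
  have hKsum : (∑ i, (max 1 ((nT (m i) : ℝ)/(nC (m i) : ℝ)) / N) ^ 2)
      = (∑ s, ((nT s : ℝ) + (nC s : ℝ)) * (max 1 ((nT s : ℝ) / (nC s : ℝ))) ^ 2) / N ^ 2 := by
    calc (∑ i, (max 1 ((nT (m i) : ℝ)/(nC (m i) : ℝ)) / N) ^ 2)
        = ∑ s, ∑ i ∈ Rebar.mSet m s, (max 1 ((nT (m i) : ℝ)/(nC (m i) : ℝ)) / N) ^ 2 :=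
          (Finset.sum_fiberwise _ _ _).symm
      _ = ∑ s, ((nT s : ℝ) + (nC s : ℝ)) * (max 1 ((nT s : ℝ) / (nC s : ℝ))) ^ 2 / N ^ 2 := by
          refine Finset.sum_congr rfl fun s _ => ?_
          have h1 : ∑ i ∈ Rebar.mSet m s, (max 1 ((nT (m i) : ℝ)/(nC (m i) : ℝ)) / N) ^ 2
              = ∑ _i ∈ Rebar.mSet m s, (max 1 ((nT s : ℝ)/(nC s : ℝ)) / N) ^ 2 := by
            refine Finset.sum_congr rfl fun i hi => ?_
            have hm : m i = s := by simpa [Rebar.mSet] using hi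
            rw [hm]
          rw [h1, Finset.sum_const, ← hsize s, nsmul_eq_mul, div_pow]
          push_cast
          ring
      _ = _ := by rw [Finset.sum_div]
  -- finish
  have hV : (0:ℝ) < (1 / (n : ℝ)) * ∑ i, (yC i - (1 / (n : ℝ)) * ∑ j, yC j) ^ 2 :=
    mul_pos (by positivity) hvar
  rw [div_pow, Real.sq_sqrt hV.le, sub_sub_cancel, div_le_iff₀ hV]
  have hDD : (∑ i, (yC i - yhat i) ^ 2) = ∑ i, d i ^ 2 := rfl
  rw [hDD]
  set Q : ℝ := ∑ i, (yC i - 1 / (n : ℝ) * ∑ j, yC j) ^ 2 with hQ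
  set D : ℝ := ∑ i, d i ^ 2 with hDset
  set A : ℝ := ∑ s, ((nT s : ℝ) + (nC s : ℝ)) * (max 1 ((nT s : ℝ) / (nC s : ℝ))) ^ 2 with hAset
  have hCdesign : Rebar.Cdesign n nT nC = ((n : ℝ) / N ^ 2) * A := rfl
  calc (∑ i, ((((nT (m i) : ℝ))/N) * (P i/(nT (m i) : ℝ) - (1 - P i)/(nC (m i) : ℝ))) * d i) ^ 2
      ≤ (∑ i, (max 1 ((nT (m i) : ℝ)/(nC (m i) : ℝ)) / N) ^ 2) * ∑ i, d i ^ 2 := hCS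
    _ = (A / N ^ 2) * D := by rw [hKsum]
    _ = D / Q * Rebar.Cdesign n nT nC * ((1 / (n : ℝ)) * Q) := by
        rw [hCdesign]
        have hQ0 : Q ≠ 0 := ne_of_gt hvar
        field_simp
end
end

section
/- In a pair-matching design, if the odds-ratio sensitivity condition holds at level Γ, then within each matched pair the bias coefficient is small: if n_T(s) = n_C(s) = 1 for all s ∈ S, Γ ≥ 1, and for all i ≠ j with m(i) = m(j) one has 0 < P_i < 1, 0 < P_j < 1, and 1/Γ ≤ (P_i·(1−P_j))/(P_j·(1−P_i)) ≤ Γ, then for every subject i, |P_i/n_T(m(i)) − (1−P_i)/n_C(m(i))| = |2P_i − 1| ≤ (√Γ − 1)/(√Γ + 1). -/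
open MeasureTheory Finset

noncomputable section

/-- In a pair-matching design under the odds-ratio sensitivity
condition at level Γ, for every subject
`|P_i/n_T(m(i)) - (1-P_i)/n_C(m(i))| = |2P_i - 1| ≤ (√Γ - 1)/(√Γ + 1)`. -/
theorem stmt17 {n : ℕ} {S : Type*} [Fintype S] [DecidableEq S] [Nonempty S]
    (m : Fin n → S) (nT nC : S → ℕ)
    (hT : ∀ s, 0 < nT s) (hC : ∀ s, 0 < nC s)
    (hsize : ∀ s, nT s + nC s = (Rebar.mSet m s).card)
    {Ω : Type*} [MeasurableSpace Ω] (μ : Measure Ω) [IsProbabilityMeasure μ]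
    (Z : Ω → Fin n → ℝ)
    (hZmeas : ∀ i, Measurable fun ω => Z ω i)
    (hZ01 : ∀ ω i, Z ω i = 0 ∨ Z ω i = 1)
    (hZsum : ∀ᵐ ω ∂μ, ∀ s, ∑ i ∈ Rebar.mSet m s, Z ω i = (nT s : ℝ))
    (hpair : ∀ s, nT s = 1 ∧ nC s = 1)
    (Γ : ℝ) (hΓ : 1 ≤ Γ)
    (hsens : ∀ i j : Fin n, i ≠ j → m i = m j →
      0 < Rebar.Pr μ Z i ∧ Rebar.Pr μ Z i < 1 ∧
      0 < Rebar.Pr μ Z j ∧ Rebar.Pr μ Z j < 1 ∧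
      1 / Γ ≤ (Rebar.Pr μ Z i * (1 - Rebar.Pr μ Z j))
                / (Rebar.Pr μ Z j * (1 - Rebar.Pr μ Z i)) ∧
      (Rebar.Pr μ Z i * (1 - Rebar.Pr μ Z j))
                / (Rebar.Pr μ Z j * (1 - Rebar.Pr μ Z i)) ≤ Γ) :
    ∀ i : Fin n,
      |Rebar.Pr μ Z i / (nT (m i) : ℝ) - (1 - Rebar.Pr μ Z i) / (nC (m i) : ℝ)|
          = |2 * Rebar.Pr μ Z i - 1|
      ∧ |2 * Rebar.Pr μ Z i - 1| ≤ (Real.sqrt Γ - 1) / (Real.sqrt Γ + 1) := by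
  intro i
  obtain ⟨h1, h2⟩ := hpair (m i)
  have heq : |Rebar.Pr μ Z i / (nT (m i) : ℝ) - (1 - Rebar.Pr μ Z i) / (nC (m i) : ℝ)|
      = |2 * Rebar.Pr μ Z i - 1| := by
    rw [h1, h2]
    norm_num
    congr 1
    ring
  refine ⟨heq, ?_⟩
  have hi : i ∈ Rebar.mSet m (m i) := by simp [Rebar.mSet]
  have hcard : (Rebar.mSet m (m i)).card = 2 := by
    have := hsize (m i); rw [h1, h2] at this; omega
  have hex : ∃ j ∈ Rebar.mSet m (m i), j ≠ i := by
    by_contra h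
    push_neg at h
    have hsub : Rebar.mSet m (m i) ⊆ {i} := fun x hx => Finset.mem_singleton.mpr (h x hx)
    have := Finset.card_le_card hsub
    simp [hcard] at this
  obtain ⟨j, hj, hji⟩ := hex
  have hmj : m j = m i := by simpa [Rebar.mSet] using hj
  have hset : Rebar.mSet m (m i) = {i, j} := by
    refine (Finset.eq_of_subset_of_card_le ?_ ?_).symm
    · intro x hx
      rcases Finset.mem_insert.mp hx with rfl | hx
      · exact hi
      · rw [Finset.mem_singleton.mp hx]; exact hj
    · rw [hcard, Finset.card_insert_of_notMem (by simp [(Ne.symm hji)]), Finset.card_singleton]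
  have hae : ∀ᵐ ω ∂μ, Z ω i + Z ω j = 1 := by
    filter_upwards [hZsum] with ω hω
    have h := hω (m i)
    rw [hset, Finset.sum_pair (Ne.symm hji), h1] at h
    push_cast at h
    linarith
  have hPj : Rebar.Pr μ Z j = 1 - Rebar.Pr μ Z i := by
    have hAmeas : MeasurableSet {ω | Z ω i = 1} := hZmeas i (measurableSet_singleton 1)
    have hseteq : ({ω | Z ω j = 1} : Set Ω) =ᵐ[μ] ({ω | Z ω i = 1}ᶜ : Set Ω) := by
      rw [Filter.eventuallyEq_set]
      filter_upwards [hae] with ω hω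
      show Z ω j = 1 ↔ ¬ Z ω i = 1
      constructor
      · intro h h'; rw [h, h'] at hω; norm_num at hω
      · intro h
        rcases hZ01 ω j with h0 | hone
        · rcases hZ01 ω i with hi0 | hi1
          · rw [h0, hi0] at hω; norm_num at hω
          · exact absurd hi1 h
        · exact hone
    unfold Rebar.Pr
    rw [measure_congr hseteq, measure_compl hAmeas (measure_ne_top μ _), measure_univ,
      ENNReal.toReal_sub_of_le prob_le_one ENNReal.one_ne_top, ENNReal.toReal_one]
  obtain ⟨hp0, hp1, _, _, hlo, hhi⟩ := hsens i j (Ne.symm hji) hmj.symm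
  set p := Rebar.Pr μ Z i with hp
  rw [hPj] at hlo hhi
  have h1p : 0 < 1 - p := by linarith
  have hΓ0 : (0:ℝ) < Γ := by linarith
  set g := Real.sqrt Γ with hg
  have hg1 : 1 ≤ g := by
    have := Real.sqrt_le_sqrt hΓ
    rwa [Real.sqrt_one] at this
  have hΓg : Γ = g ^ 2 := (Real.sq_sqrt hΓ0.le).symm
  have hgp : (0:ℝ) < g + 1 := by linarith
  have hdenpos : (0:ℝ) < (1 - p) * (1 - p) := mul_pos h1p h1p
  have key1 : p * p ≤ g ^ 2 * ((1 - p) * (1 - p)) := by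
    rw [div_le_iff₀ hdenpos] at hhi
    nlinarith [hhi]
  have key2 : (1 - p) * (1 - p) ≤ g ^ 2 * (p * p) := by
    rw [div_le_div_iff₀ hΓ0 hdenpos] at hlo
    nlinarith [hlo]
  have hgposmul : (0:ℝ) < g * (1 - p) := mul_pos (by linarith) h1p
  have hgpmul : (0:ℝ) < g * p := mul_pos (by linarith) hp0
  have hx : p ≤ g * (1 - p) := by nlinarith [key1, hgposmul, hp0]
  have hy : 1 - p ≤ g * p := by nlinarith [key2, hgpmul, h1p]
  rw [abs_le]
  constructor
  · have hlow : (1 - g) / (g + 1) ≤ 2 * p - 1 := by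
      rw [div_le_iff₀ hgp]
      have hrw : (2 * p - 1) * (g + 1) = 2 * (g * p) + 2 * p - g - 1 := by ring
      rw [hrw]
      linarith [hy]
    calc -((g - 1) / (g + 1)) = (1 - g) / (g + 1) := by ring
      _ ≤ 2 * p - 1 := hlow
  · rw [le_div_iff₀ hgp]
    have hrw : (2 * p - 1) * (g + 1) = 2 * (g * p) + 2 * p - g - 1 := by ring
    rw [hrw]
    linarith [hx]
end
end

section
/- (Proposition 4, MSE form.) In a pair-matching design, if Γ ≥ 1 and for all distinct matched subjects i ≠ j with m(i) = m(j) one has 0 < P_i < 1, 0 < P_j < 1, and 1/Γ ≤ (P_i·(1−P_j))/(P_j·(1−P_i)) ≤ Γ, then the squared bias of the rebar estimator satisfies (E[τ̂_rebar] − τ_ETT)² ≤ MSE_M · 4·(√Γ − 1)/(√Γ + 1). -/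
open MeasureTheory Finset

noncomputable section

set_option maxHeartbeats 2000000 in
/-- Proposition 4, MSE form: in a pair-matching design under the
odds-ratio sensitivity condition at level Γ,
`(E[τ̂_rebar] - τ_ETT)² ≤ MSE_M · 4(√Γ - 1)/(√Γ + 1)`. -/
theorem stmt18 {n : ℕ} {S : Type*} [Fintype S] [DecidableEq S] [Nonempty S]
    (m : Fin n → S) (nT nC : S → ℕ)
    (hT : ∀ s, 0 < nT s) (hC : ∀ s, 0 < nC s)
    (hsize : ∀ s, nT s + nC s = (Rebar.mSet m s).card)
    {Ω : Type*} [MeasurableSpace Ω] (μ : Measure Ω) [IsProbabilityMeasure μ]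
    (Z : Ω → Fin n → ℝ)
    (hZmeas : ∀ i, Measurable fun ω => Z ω i)
    (hZ01 : ∀ ω i, Z ω i = 0 ∨ Z ω i = 1)
    (hZsum : ∀ᵐ ω ∂μ, ∀ s, ∑ i ∈ Rebar.mSet m s, Z ω i = (nT s : ℝ))
    (hpair : ∀ s, nT s = 1 ∧ nC s = 1)
    (Γ : ℝ) (hΓ : 1 ≤ Γ)
    (hsens : ∀ i j : Fin n, i ≠ j → m i = m j →
      0 < Rebar.Pr μ Z i ∧ Rebar.Pr μ Z i < 1 ∧
      0 < Rebar.Pr μ Z j ∧ Rebar.Pr μ Z j < 1 ∧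
      1 / Γ ≤ (Rebar.Pr μ Z i * (1 - Rebar.Pr μ Z j))
                / (Rebar.Pr μ Z j * (1 - Rebar.Pr μ Z i)) ∧
      (Rebar.Pr μ Z i * (1 - Rebar.Pr μ Z j))
                / (Rebar.Pr μ Z j * (1 - Rebar.Pr μ Z i)) ≤ Γ)
    (yT yC yhat : Fin n → ℝ) :
    ((∫ ω, Rebar.tauM m nT nC
          (fun i => Rebar.Yobs yT yC (Z ω) i - yhat i) (Z ω) ∂μ)
        - Rebar.tauETT μ Z yT yC nT) ^ 2
      ≤ Rebar.MSE yC yhat *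
          (4 * (Real.sqrt Γ - 1) / (Real.sqrt Γ + 1)) := by
  classical
  have hΓ0 : (0:ℝ) ≤ Γ := le_trans zero_le_one hΓ
  set g := Real.sqrt Γ with hgdef
  have hg1 : 1 ≤ g := Real.one_le_sqrt.mpr hΓ
  have hg2 : g ^ 2 = Γ := Real.sq_sqrt hΓ0
  have hgp0 : 0 < g + 1 := by linarith
  set δ : ℝ := (g - 1) / (g + 1) with hδdef
  have hδ0 : 0 ≤ δ := div_nonneg (by linarith) hgp0.le
  have hδ1 : δ ≤ 1 := by rw [hδdef, div_le_one hgp0]; linarith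
  -- measurability and integral of Z i
  have hmeasSet : ∀ i : Fin n, MeasurableSet {ω | Z ω i = 1} :=
    fun i => hZmeas i (measurableSet_singleton 1)
  have hZind : ∀ i : Fin n,
      (fun ω => Z ω i) = Set.indicator {ω | Z ω i = 1} (fun _ => (1:ℝ)) := by
    intro i; funext ω
    rcases hZ01 ω i with h | h
    · have hω : ω ∉ {ω | Z ω i = 1} := by simp [Set.mem_setOf_eq, h]
      simp [Set.indicator_of_notMem hω, h]
    · have hω : ω ∈ {ω | Z ω i = 1} := h
      simp [Set.indicator_of_mem hω, h]
  have hZint : ∀ i : Fin n, Integrable (fun ω => Z ω i) μ := by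
    intro i; rw [hZind i]; exact (integrable_const (1:ℝ)).indicator (hmeasSet i)
  have hZintegral : ∀ i : Fin n, ∫ ω, Z ω i ∂μ = Rebar.Pr μ Z i := by
    intro i
    rw [hZind i, integral_indicator_const (1:ℝ) (hmeasSet i)]
    simp [Rebar.Pr]; rfl
  -- cardinalities
  have hcard2 : ∀ s, (Rebar.mSet m s).card = 2 := by
    intro s; have h := hsize s; rw [(hpair s).1, (hpair s).2] at h; omega
  have hNT : Rebar.nTtot nT = Fintype.card S := by
    unfold Rebar.nTtot
    rw [Finset.sum_congr rfl fun s _ => (hpair s).1]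
    simp
  have hn2 : n = 2 * Fintype.card S := by
    have h1 : n = ∑ s : S, (Rebar.mSet m s).card := by
      conv_lhs => rw [← Finset.card_fin n]
      exact Finset.card_eq_sum_card_fiberwise (fun i _ => Finset.mem_univ (m i))
    rw [h1, Finset.sum_congr rfl fun s _ => hcard2 s]
    simp [Finset.sum_const, mul_comm]
  have hScard : 0 < Fintype.card S := Fintype.card_pos
  set Nr : ℝ := ((Rebar.nTtot nT : ℕ) : ℝ) with hNr
  have hNrpos : 0 < Nr := by
    rw [hNr, hNT]; exact_mod_cast hScard
  have hnNr : (n : ℝ) = 2 * Nr := by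
    rw [hNr, hNT, hn2]; push_cast; ring
  -- partner in each pair and P i + P j = 1
  have hpartner : ∀ i : Fin n, ∃ j, j ≠ i ∧ m j = m i ∧
      Rebar.Pr μ Z i + Rebar.Pr μ Z j = 1 := by
    intro i
    obtain ⟨a, b, hab, hset⟩ := Finset.card_eq_two.mp (hcard2 (m i))
    have hi : i ∈ Rebar.mSet m (m i) := by simp [Rebar.mSet]
    have hmema : a ∈ Rebar.mSet m (m i) := by rw [hset]; simp
    have hmemb : b ∈ Rebar.mSet m (m i) := by rw [hset]; simp
    have hma : m a = m i := by
      simpa [Rebar.mSet, Finset.mem_filter] using hmema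
    have hmb : m b = m i := by
      simpa [Rebar.mSet, Finset.mem_filter] using hmemb
    have hsum1 : Rebar.Pr μ Z a + Rebar.Pr μ Z b = 1 := by
      have hae : ∀ᵐ ω ∂μ, (∑ k ∈ Rebar.mSet m (m i), Z ω k) = ((nT (m i) : ℕ) : ℝ) :=
        hZsum.mono fun ω h => h (m i)
      have h2 : ∫ ω, (∑ k ∈ Rebar.mSet m (m i), Z ω k) ∂μ = ((nT (m i) : ℕ) : ℝ) := by
        rw [integral_congr_ae hae]; simp
      rw [integral_finset_sum _ (fun k _ => hZint k)] at h2
      rw [hset, Finset.sum_pair hab, hZintegral a, hZintegral b, (hpair (m i)).1] at h2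
      simpa using h2
    rw [hset] at hi
    rcases Finset.mem_insert.mp hi with h | h
    · exact ⟨b, by rw [h]; exact hab.symm, by rw [hmb, h], by rw [h]; exact hsum1⟩
    · have hib : i = b := Finset.mem_singleton.mp h
      exact ⟨a, by rw [hib]; exact hab, by rw [hma, hib],
        by rw [hib, add_comm]; exact hsum1⟩
  -- key bound on (2 P i - 1)²
  have hdbound : ∀ i : Fin n, (2 * Rebar.Pr μ Z i - 1) ^ 2 ≤ δ ^ 2 := by
    intro i
    obtain ⟨j, hji, hmj, hsum⟩ := hpartner i
    obtain ⟨hPi0, hPi1, hPj0, hPj1, hlo, hhi⟩ := hsens i j (Ne.symm hji) hmj.symm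
    set p := Rebar.Pr μ Z i with hp
    have hpj : Rebar.Pr μ Z j = 1 - p := by linarith
    rw [hpj] at hlo hhi
    have h1p : 0 < 1 - p := by linarith
    have he : (1 : ℝ) - (1 - p) = p := by ring
    rw [he] at hlo hhi
    have hden : 0 < (1 - p) * (1 - p) := mul_pos h1p h1p
    have hΓpos : 0 < Γ := lt_of_lt_of_le zero_lt_one hΓ
    have hupper : p * p ≤ Γ * ((1 - p) * (1 - p)) := by
      have := (div_le_iff₀ hden).mp hhi; linarith
    have hlower : 1 * ((1 - p) * (1 - p)) ≤ p * p * Γ :=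
      (div_le_div_iff₀ hΓpos hden).mp hlo
    have hub : p ≤ g * (1 - p) := by
      have hq : p ^ 2 ≤ (g * (1 - p)) ^ 2 := by nlinarith [hupper, hg2]
      have h0 : 0 ≤ g * (1 - p) := mul_nonneg (by linarith) h1p.le
      nlinarith [hq, h0, hPi0]
    have hlb : 1 - p ≤ g * p := by
      have hq : (1 - p) ^ 2 ≤ (g * p) ^ 2 := by nlinarith [hlower, hg2]
      have h0 : 0 ≤ g * p := mul_nonneg (by linarith) hPi0.le
      nlinarith [hq, h0, h1p]
    have hd1 : 2 * p - 1 ≤ δ := by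
      rw [hδdef, le_div_iff₀ hgp0]; nlinarith [hub]
    have hd2 : -δ ≤ 2 * p - 1 := by
      have h : (-(g - 1)) / (g + 1) ≤ 2 * p - 1 := by
        rw [div_le_iff₀ hgp0]; nlinarith [hlb]
      calc -δ = (-(g - 1)) / (g + 1) := by rw [hδdef, neg_div]
        _ ≤ 2 * p - 1 := h
    exact sq_le_sq' hd2 hd1
  -- pointwise formula for the estimator
  have hkey : ∀ ω, Rebar.tauM m nT nC
      (fun i => Rebar.Yobs yT yC (Z ω) i - yhat i) (Z ω)
      = (∑ i, ((yT i - yC i + 2 * (yC i - yhat i)) / Nr) * Z ω i)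
        + (-(∑ i, (yC i - yhat i)) / Nr) := by
    intro ω
    have hterm : ∀ i : Fin n,
        (yT i - yC i + 2 * (yC i - yhat i)) * Z ω i - (yC i - yhat i)
        = (Rebar.Yobs yT yC (Z ω) i - yhat i) * Z ω i
          - (Rebar.Yobs yT yC (Z ω) i - yhat i) * (1 - Z ω i) := by
      intro i; rcases hZ01 ω i with h | h <;> (rw [Rebar.Yobs, h]; ring)
    have hstep : ∀ s : S, Rebar.w nT s * Rebar.tdiff m nT nC
        (fun i => Rebar.Yobs yT yC (Z ω) i - yhat i) (Z ω) s
        = ∑ i ∈ Rebar.mSet m s,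
            (((yT i - yC i + 2 * (yC i - yhat i)) * Z ω i - (yC i - yhat i)) / Nr) := by
      intro s
      simp only [Rebar.w, Rebar.tdiff, (hpair s).1, (hpair s).2, Nat.cast_one, ← hNr]
      rw [← Finset.sum_div, Finset.sum_congr rfl (fun i _ => hterm i),
        Finset.sum_sub_distrib]
      ring
    rw [Rebar.tauM, Finset.sum_congr rfl fun s _ => hstep s]
    rw [show (fun s : S => ∑ i ∈ Rebar.mSet m s,
        (((yT i - yC i + 2 * (yC i - yhat i)) * Z ω i - (yC i - yhat i)) / Nr))
      = (fun s : S => ∑ i ∈ Finset.univ.filter (fun i => m i = s),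
        (((yT i - yC i + 2 * (yC i - yhat i)) * Z ω i - (yC i - yhat i)) / Nr)) from rfl]
    rw [Finset.sum_fiberwise Finset.univ m
        (fun i => ((yT i - yC i + 2 * (yC i - yhat i)) * Z ω i - (yC i - yhat i)) / Nr)]
    rw [Finset.sum_congr rfl (fun i (_ : i ∈ Finset.univ) => show
        ((yT i - yC i + 2 * (yC i - yhat i)) * Z ω i - (yC i - yhat i)) / Nr
        = ((yT i - yC i + 2 * (yC i - yhat i)) / Nr) * Z ω i - (yC i - yhat i) / Nr
        from by ring)]
    rw [Finset.sum_sub_distrib, ← Finset.sum_div, sub_eq_add_neg, ← neg_div]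
  -- compute the expectation
  have hE : (∫ ω, Rebar.tauM m nT nC
        (fun i => Rebar.Yobs yT yC (Z ω) i - yhat i) (Z ω) ∂μ)
      = (∑ i, ((yT i - yC i) * Rebar.Pr μ Z i
          + (yC i - yhat i) * (2 * Rebar.Pr μ Z i - 1))) / Nr := by
    simp only [hkey]
    rw [integral_add (integrable_finset_sum _ fun i _ => (hZint i).const_mul _)
        (integrable_const _),
      integral_finset_sum _ (fun i _ => (hZint i).const_mul _), integral_const]
    simp only [integral_const_mul, hZintegral, probReal_univ, one_smul]
    rw [Finset.sum_congr rfl (fun i (_ : i ∈ Finset.univ) => show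
        (yT i - yC i + 2 * (yC i - yhat i)) / Nr * Rebar.Pr μ Z i
        = ((yT i - yC i) * Rebar.Pr μ Z i
            + (yC i - yhat i) * (2 * Rebar.Pr μ Z i - 1) + (yC i - yhat i)) / Nr
        from by ring)]
    rw [← Finset.sum_div, ← add_div]
    congr 1
    rw [Finset.sum_add_distrib]
    ring
  -- the bias formula
  have hbias : (∫ ω, Rebar.tauM m nT nC
        (fun i => Rebar.Yobs yT yC (Z ω) i - yhat i) (Z ω) ∂μ)
      - Rebar.tauETT μ Z yT yC nT
      = (∑ i, (yC i - yhat i) * (2 * Rebar.Pr μ Z i - 1)) / Nr := by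
    rw [hE, Rebar.tauETT, ← hNr, div_sub_div_same]
    congr 1
    rw [← Finset.sum_sub_distrib]
    exact Finset.sum_congr rfl fun i _ => by ring
  -- mean squared error identity
  have hMSEeq : ∑ i, (yC i - yhat i) ^ 2 = (n : ℝ) * Rebar.MSE yC yhat := by
    rw [Rebar.MSE]
    have hn0 : (0:ℝ) < (n:ℝ) := by rw [hnNr]; linarith
    rw [Finset.sum_congr rfl (fun i (_ : i ∈ Finset.univ) =>
      show (yC i - yhat i) ^ 2 = (yhat i - yC i) ^ 2 from by ring)]
    field_simp
  have hMSE0 : 0 ≤ Rebar.MSE yC yhat := by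
    rw [Rebar.MSE]
    have hn0 : (0:ℝ) < (n:ℝ) := by rw [hnNr]; linarith
    positivity
  -- final inequality
  rw [hbias]
  set D := ∑ i, (yC i - yhat i) * (2 * Rebar.Pr μ Z i - 1) with hD
  have hCS : D ^ 2 ≤ (∑ i, (yC i - yhat i) ^ 2)
      * (∑ i, (2 * Rebar.Pr μ Z i - 1) ^ 2) :=
    Finset.sum_mul_sq_le_sq_mul_sq _ _ _
  have hsd : ∑ i, (2 * Rebar.Pr μ Z i - 1) ^ 2 ≤ (n : ℝ) * δ ^ 2 := by
    calc ∑ i, (2 * Rebar.Pr μ Z i - 1) ^ 2 ≤ ∑ _i : Fin n, δ ^ 2 :=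
          Finset.sum_le_sum fun i _ => hdbound i
      _ = (n : ℝ) * δ ^ 2 := by
          rw [Finset.sum_const, Finset.card_univ, Fintype.card_fin, nsmul_eq_mul]
  have hnum : D ^ 2 ≤ 4 * Nr ^ 2 * (Rebar.MSE yC yhat * δ ^ 2) := by
    have h1 : (∑ i, (yC i - yhat i) ^ 2) * (∑ i, (2 * Rebar.Pr μ Z i - 1) ^ 2)
        ≤ ((n : ℝ) * Rebar.MSE yC yhat) * ((n : ℝ) * δ ^ 2) := by
      apply mul_le_mul (le_of_eq hMSEeq) hsd
        (Finset.sum_nonneg fun i _ => sq_nonneg _)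
      rw [← hMSEeq]
      exact Finset.sum_nonneg fun i _ => sq_nonneg _
    calc D ^ 2 ≤ _ := hCS
      _ ≤ ((n : ℝ) * Rebar.MSE yC yhat) * ((n : ℝ) * δ ^ 2) := h1
      _ = 4 * Nr ^ 2 * (Rebar.MSE yC yhat * δ ^ 2) := by rw [hnNr]; ring
  have hNr2 : (0:ℝ) < Nr ^ 2 := by positivity
  calc (D / Nr) ^ 2 = D ^ 2 / Nr ^ 2 := div_pow D Nr 2
    _ ≤ (4 * Nr ^ 2 * (Rebar.MSE yC yhat * δ ^ 2)) / Nr ^ 2 :=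
        (div_le_div_iff_of_pos_right hNr2).mpr hnum
    _ = 4 * (Rebar.MSE yC yhat * δ ^ 2) := by field_simp
    _ ≤ Rebar.MSE yC yhat * (4 * (g - 1) / (g + 1)) := by
        have h4 : 4 * (g - 1) / (g + 1) = 4 * δ := by rw [hδdef]; ring
        rw [h4]
        have hδ2 : δ ^ 2 ≤ δ := by nlinarith [hδ0, hδ1]
        nlinarith [mul_le_mul_of_nonneg_left hδ2 hMSE0]
end
end

section
/- (Proposition 4, R² form.) In a pair-matching design, if Γ ≥ 1, for all distinct matched subjects i ≠ j with m(i) = m(j) one has 0 < P_i < 1, 0 < P_j < 1, and 1/Γ ≤ (P_i·(1−P_j))/(P_j·(1−P_i)) ≤ Γ, and Σ_{i=1}^n (y_C(i) − ȳ_C)² > 0, then ((E[τ̂_rebar] − τ_ETT)/SD(y_C))² ≤ (1 − R²_M) · 4·(√Γ − 1)/(√Γ + 1). -/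
open MeasureTheory Finset

noncomputable section

set_option maxHeartbeats 1600000 in
/-- Proposition 4, R² form: in a pair-matching design under the
odds-ratio sensitivity condition at level Γ, with nondegenerate control
potential outcomes,
`((E[τ̂_rebar] - τ_ETT)/SD(y_C))² ≤ (1 - R²_M) · 4(√Γ - 1)/(√Γ + 1)`. -/
theorem stmt19 {n : ℕ} {S : Type*} [Fintype S] [DecidableEq S] [Nonempty S]
    (m : Fin n → S) (nT nC : S → ℕ)
    (hT : ∀ s, 0 < nT s) (hC : ∀ s, 0 < nC s)
    (hsize : ∀ s, nT s + nC s = (Rebar.mSet m s).card)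
    {Ω : Type*} [MeasurableSpace Ω] (μ : Measure Ω) [IsProbabilityMeasure μ]
    (Z : Ω → Fin n → ℝ)
    (hZmeas : ∀ i, Measurable fun ω => Z ω i)
    (hZ01 : ∀ ω i, Z ω i = 0 ∨ Z ω i = 1)
    (hZsum : ∀ᵐ ω ∂μ, ∀ s, ∑ i ∈ Rebar.mSet m s, Z ω i = (nT s : ℝ))
    (hpair : ∀ s, nT s = 1 ∧ nC s = 1)
    (Γ : ℝ) (hΓ : 1 ≤ Γ)
    (hsens : ∀ i j : Fin n, i ≠ j → m i = m j →
      0 < Rebar.Pr μ Z i ∧ Rebar.Pr μ Z i < 1 ∧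
      0 < Rebar.Pr μ Z j ∧ Rebar.Pr μ Z j < 1 ∧
      1 / Γ ≤ (Rebar.Pr μ Z i * (1 - Rebar.Pr μ Z j))
                / (Rebar.Pr μ Z j * (1 - Rebar.Pr μ Z i)) ∧
      (Rebar.Pr μ Z i * (1 - Rebar.Pr μ Z j))
                / (Rebar.Pr μ Z j * (1 - Rebar.Pr μ Z i)) ≤ Γ)
    (yT yC yhat : Fin n → ℝ)
    (hvar : 0 < ∑ i, (yC i - (1 / (n : ℝ)) * ∑ j, yC j) ^ 2) :
    (((∫ ω, Rebar.tauM m nT nC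
            (fun i => Rebar.Yobs yT yC (Z ω) i - yhat i) (Z ω) ∂μ)
          - Rebar.tauETT μ Z yT yC nT)
        / Real.sqrt ((1 / (n : ℝ)) *
            ∑ i, (yC i - (1 / (n : ℝ)) * ∑ j, yC j) ^ 2)) ^ 2
      ≤ (1 - (1 - (∑ i, (yC i - yhat i) ^ 2)
                    / ∑ i, (yC i - (1 / (n : ℝ)) * ∑ j, yC j) ^ 2))
          * (4 * (Real.sqrt Γ - 1) / (Real.sqrt Γ + 1)) := by
  classical
  set P : Fin n → ℝ := Rebar.Pr μ Z with hP
  set d : Fin n → ℝ := fun i => yC i - yhat i with hd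
  set c : Fin n → ℝ := fun i => yT i + yC i - 2 * yhat i with hc
  set lam : ℝ := (Real.sqrt Γ - 1) / (Real.sqrt Γ + 1) with hlam
  set D : ℝ := ∑ i, (yC i - yhat i) ^ 2 with hD
  set V : ℝ := ∑ i, (yC i - (1 / (n : ℝ)) * ∑ j, yC j) ^ 2 with hV
  have hΓ0 : (0:ℝ) ≤ Γ := by linarith
  have hsΓ : 1 ≤ Real.sqrt Γ := by
    rw [show (1:ℝ) = Real.sqrt 1 by simp]
    exact Real.sqrt_le_sqrt hΓ
  have hlam0 : 0 ≤ lam := div_nonneg (by linarith) (by linarith)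
  have hlam1 : lam ≤ 1 := by
    rw [hlam, div_le_one (by linarith)]; linarith
  set kr : ℝ := (Fintype.card S : ℝ) with hkr
  have hk0 : 0 < kr := by
    rw [hkr]; exact_mod_cast Fintype.card_pos
  have hcard : ∀ s, (Rebar.mSet m s).card = 2 := by
    intro s
    have := hsize s
    rw [(hpair s).1, (hpair s).2] at this
    omega
  have hfib : ∀ (f : Fin n → ℝ),
      ∑ s, ∑ i ∈ Rebar.mSet m s, f i = ∑ i, f i := fun f =>
    Finset.sum_fiberwise Finset.univ m f
  have hn2k : (n : ℝ) = 2 * kr := by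
    have h := hfib (fun _ => (1:ℝ))
    simp only [Finset.sum_const, nsmul_eq_mul, mul_one, Finset.card_univ,
      Fintype.card_fin] at h
    rw [Finset.sum_congr rfl fun s _ => by rw [hcard s]] at h
    simp only [Finset.sum_const, Finset.card_univ, nsmul_eq_mul] at h
    rw [hkr]; push_cast at h ⊢; linarith
  have hn0 : (0:ℝ) < (n:ℝ) := by rw [hn2k]; linarith
  -- integral of Z i
  have hZrep : ∀ i, (fun ω => Z ω i) = Set.indicator {ω | Z ω i = 1}
      (fun _ => (1:ℝ)) := by
    intro i; funext ω
    by_cases h : Z ω i = 1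
    · rw [Set.indicator_of_mem (show ω ∈ {ω | Z ω i = 1} from h), h]
    · rw [Set.indicator_of_notMem (show ω ∉ {ω | Z ω i = 1} from h)]
      rcases hZ01 ω i with h0 | h1
      · exact h0
      · exact absurd h1 h
  have hAmeas : ∀ i, MeasurableSet {ω | Z ω i = 1} := fun i =>
    (hZmeas i) (measurableSet_singleton 1)
  have hZint : ∀ i, Integrable (fun ω => Z ω i) μ := fun i => by
    rw [hZrep i]; exact (integrable_const 1).indicator (hAmeas i)
  have hZE : ∀ i, ∫ ω, Z ω i ∂μ = P i := fun i => by
    rw [hZrep i, MeasureTheory.integral_indicator_const _ (hAmeas i)]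
    simp [hP, Rebar.Pr, Measure.real]
  -- weights
  have hw : ∀ s, Rebar.w nT s = 1 / kr := by
    intro s
    unfold Rebar.w Rebar.nTtot
    rw [(hpair s).1, Finset.sum_congr rfl fun t _ => (hpair t).1]
    simp [hkr, Finset.card_univ]
  -- pointwise value of the estimator
  have hpt : ∀ ω, Rebar.tauM m nT nC
      (fun i => Rebar.Yobs yT yC (Z ω) i - yhat i) (Z ω)
      = (1 / kr) * ∑ i, (Z ω i * c i - d i) := by
    intro ω
    unfold Rebar.tauM
    rw [← hfib (fun i => Z ω i * c i - d i), Finset.mul_sum]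
    refine Finset.sum_congr rfl fun s _ => ?_
    rw [hw s]
    congr 1
    unfold Rebar.tdiff
    rw [(hpair s).1, (hpair s).2]
    simp only [Nat.cast_one, one_div_one, one_mul]
    rw [← Finset.sum_sub_distrib]
    refine Finset.sum_congr rfl fun i _ => ?_
    rcases hZ01 ω i with h | h <;> simp only [Rebar.Yobs, hc, hd, h] <;> ring
  -- expectation of the estimator
  have hE : (∫ ω, Rebar.tauM m nT nC
      (fun i => Rebar.Yobs yT yC (Z ω) i - yhat i) (Z ω) ∂μ)
      = (1 / kr) * ∑ i, (P i * c i - d i) := by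
    simp_rw [hpt]
    rw [MeasureTheory.integral_const_mul]
    congr 1
    have hint : ∀ i ∈ Finset.univ, Integrable (fun ω => Z ω i * c i - d i) μ :=
      fun i _ => ((hZint i).mul_const (c i)).sub (integrable_const (d i))
    rw [MeasureTheory.integral_finset_sum Finset.univ hint]
    refine Finset.sum_congr rfl fun i _ => ?_
    rw [MeasureTheory.integral_sub ((hZint i).mul_const (c i))
      (integrable_const (d i)), MeasureTheory.integral_mul_const, hZE i,
      MeasureTheory.integral_const]
    simp
  have hT2 : Rebar.tauETT μ Z yT yC nT
      = (1 / kr) * ∑ i, (yT i - yC i) * P i := by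
    unfold Rebar.tauETT Rebar.nTtot
    rw [Finset.sum_congr rfl fun t _ => (hpair t).1]
    simp only [Finset.sum_const, Finset.card_univ, smul_eq_mul, mul_one]
    rw [← hP, ← hkr, one_div, inv_mul_eq_div]
  set B : ℝ := ∑ i, (2 * P i - 1) * d i with hB
  clear_value P d c lam D V kr B
  have hbias : (∫ ω, Rebar.tauM m nT nC
      (fun i => Rebar.Yobs yT yC (Z ω) i - yhat i) (Z ω) ∂μ)
      - Rebar.tauETT μ Z yT yC nT = B / kr := by
    rw [hE, hT2, ← mul_sub, ← Finset.sum_sub_distrib]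
    have h : ∑ i, ((P i * c i - d i) - (yT i - yC i) * P i) = B := by
      rw [hB]
      refine Finset.sum_congr rfl fun i _ => ?_
      simp only [hc, hd]; ring
    rw [h, one_div, inv_mul_eq_div]
  -- upper bound on 2 P i - 1 from the sensitivity condition
  have hupper : ∀ i j : Fin n, i ≠ j → m i = m j → P i + P j = 1 →
      2 * P i - 1 ≤ lam := by
    intro i j hij hm hsum
    obtain ⟨hi0, hi1, hj0, hj1, hlb, hub⟩ := hsens i j hij hm
    have h1i : 0 < 1 - P i := by linarith
    have hPj : P j = 1 - P i := by linarith
    rw [hPj] at hub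
    have hsq : P i ^ 2 ≤ Γ * (1 - P i) ^ 2 := by
      rw [div_le_iff₀ (mul_pos h1i h1i)] at hub
      linarith [hub]
    have hle : P i ≤ Real.sqrt Γ * (1 - P i) := by
      have h := Real.sqrt_le_sqrt hsq
      rwa [Real.sqrt_sq hi0.le, Real.sqrt_mul hΓ0, Real.sqrt_sq h1i.le] at h
    rw [hlam, le_div_iff₀ (by linarith : (0:ℝ) < Real.sqrt Γ + 1)]
    nlinarith [hle, hle]
  -- per-set bound
  have hkey : ∀ s : S, (∑ i ∈ Rebar.mSet m s, (2 * P i - 1) * d i) ^ 2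
      ≤ lam ^ 2 * (2 * ∑ i ∈ Rebar.mSet m s, d i ^ 2) := by
    intro s
    obtain ⟨i, j, hij, hset⟩ := Finset.card_eq_two.mp (hcard s)
    have hmi : m i = s := by
      have hi : i ∈ Rebar.mSet m s := by rw [hset]; simp
      simpa [Rebar.mSet] using hi
    have hmj : m j = s := by
      have hj : j ∈ Rebar.mSet m s := by rw [hset]; simp
      simpa [Rebar.mSet] using hj
    have hmij : m i = m j := hmi.trans hmj.symm
    have hPsum : P i + P j = 1 := by
      have h1 : ∀ᵐ ω ∂μ, Z ω i + Z ω j = 1 := by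
        filter_upwards [hZsum] with ω hω
        have h2 := hω s
        rw [hset, Finset.sum_pair hij, (hpair s).1] at h2
        simpa using h2
      have h2 : ∫ ω, (Z ω i + Z ω j) ∂μ = 1 := by
        rw [integral_congr_ae h1]; simp
      rwa [MeasureTheory.integral_add (hZint i) (hZint j), hZE i, hZE j] at h2
    have hui := hupper i j hij hmij hPsum
    have huj := hupper j i hij.symm hmij.symm (by linarith)
    have hle1 : -lam ≤ 2 * P i - 1 := by linarith
    have ha2 : (2 * P i - 1) ^ 2 ≤ lam ^ 2 := sq_le_sq' hle1 hui
    have h2j : 2 * P j - 1 = -(2 * P i - 1) := by linarith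
    rw [hset, Finset.sum_pair hij, Finset.sum_pair hij, h2j]
    have hstep : ((2 * P i - 1) * d i + -(2 * P i - 1) * d j) ^ 2
        = (2 * P i - 1) ^ 2 * (d i - d j) ^ 2 := by ring
    have h1 : (2 * P i - 1) ^ 2 * (d i - d j) ^ 2
        ≤ lam ^ 2 * (d i - d j) ^ 2 :=
      mul_le_mul_of_nonneg_right ha2 (sq_nonneg _)
    have h2 : lam ^ 2 * (d i - d j) ^ 2
        ≤ lam ^ 2 * (2 * (d i ^ 2 + d j ^ 2)) :=
      mul_le_mul_of_nonneg_left (by nlinarith [sq_nonneg (d i + d j)])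
        (sq_nonneg lam)
    rw [hstep]
    exact h1.trans h2
  -- Cauchy-Schwarz over sets
  have hCS : B ^ 2 ≤ kr * ∑ s, (∑ i ∈ Rebar.mSet m s, (2 * P i - 1) * d i) ^ 2 := by
    have h := Finset.sum_mul_sq_le_sq_mul_sq Finset.univ (fun _ : S => (1:ℝ))
      (fun s => ∑ i ∈ Rebar.mSet m s, (2 * P i - 1) * d i)
    simp only [one_mul, one_pow, Finset.sum_const, Finset.card_univ,
      nsmul_eq_mul, mul_one] at h
    rw [hB, ← hfib (fun i => (2 * P i - 1) * d i), hkr]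
    exact h
  have hDd : ∑ i, d i ^ 2 = D := by simp only [hD, hd]
  have hsum2 : ∑ s, (∑ i ∈ Rebar.mSet m s, (2 * P i - 1) * d i) ^ 2
      ≤ lam ^ 2 * 2 * D := by
    calc ∑ s, (∑ i ∈ Rebar.mSet m s, (2 * P i - 1) * d i) ^ 2
        ≤ ∑ s, lam ^ 2 * (2 * ∑ i ∈ Rebar.mSet m s, d i ^ 2) :=
          Finset.sum_le_sum fun s _ => hkey s
      _ = lam ^ 2 * (2 * ∑ s, ∑ i ∈ Rebar.mSet m s, d i ^ 2) := by
          rw [← Finset.mul_sum]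
          congr 1
          rw [← Finset.mul_sum]
      _ = lam ^ 2 * 2 * D := by
          rw [hfib (fun i => d i ^ 2), hDd, ← mul_assoc]
  have hD0 : 0 ≤ D := by
    rw [hD]; exact Finset.sum_nonneg fun i _ => sq_nonneg _
  have hV0 : 0 < V := hvar
  have hv0 : (0:ℝ) ≤ 1 / (n : ℝ) * V :=
    mul_nonneg (one_div_nonneg.mpr hn0.le) hV0.le
  have hB2 : B ^ 2 ≤ 2 * lam ^ 2 * kr * D := by
    calc B ^ 2 ≤ kr * ∑ s, (∑ i ∈ Rebar.mSet m s, (2 * P i - 1) * d i) ^ 2 := hCS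
      _ ≤ kr * (lam ^ 2 * 2 * D) := by
          exact mul_le_mul_of_nonneg_left hsum2 hk0.le
      _ = 2 * lam ^ 2 * kr * D := by ring
  rw [hbias, div_pow, Real.sq_sqrt hv0, div_pow, div_div]
  have hRHS : (1 - (1 - D / V)) * (4 * (Real.sqrt Γ - 1) / (Real.sqrt Γ + 1))
      = D / V * (4 * lam) := by
    rw [hlam]; ring
  rw [hRHS, div_le_iff₀ (mul_pos (pow_pos hk0 2)
    (mul_pos (one_div_pos.mpr hn0) hV0)), hn2k]
  have hVne : V ≠ 0 := ne_of_gt hV0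
  have hkne : kr ≠ 0 := ne_of_gt hk0
  have hgoal : D / V * (4 * lam) * (kr ^ 2 * (1 / (2 * kr) * V))
      = 2 * lam * kr * D := by
    field_simp
    ring
  rw [hgoal]
  linarith [hB2, mul_nonneg (mul_nonneg (mul_nonneg
    (sub_nonneg.mpr hlam1) hlam0) hk0.le) hD0]
end
end
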